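/- Specialisation to the first variation: for every marked alphabet R′ = M ∪̇ N′ on {1,…,m+n} with |M| = m and |N| = n, setting all factorial parameters to zero recovers the classical supersymmetric skew Schur function: for all partitions μ ⊆ λ and all x = (x_1,…,x_m), y = (y_1,…,y_n) in a commutative ring, s^{R′}_{λ/μ}(x,y|0) = s_{λ/μ}(x,y), where 0 denotes the doubly infinite family with a_t = 0 for all t ∈ ℤ. -/

import Mathlib

namespace SuperSchur

variable {A : Type*} [CommRing A]

/-- The content of a box `(i, j)` (rows and columns indexed from 0;
row `i` occupies columns `μ_i ≤ j < λ_i`, so the content is `j - i`). -/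
def content (p : ℕ × ℕ) : ℤ := (p.2 : ℤ) - (p.1 : ℤ)

/-- The cells of the skew Young diagram `F^{λ/μ}` (0-indexed rows and columns). -/
def cells (lam mu : List ℕ) : Finset (ℕ × ℕ) :=
  (Finset.range lam.length).biUnion fun i =>
    (Finset.Ico (mu.getD i 0) (lam.getD i 0)).image fun j => (i, j)

/-- `l` is a partition: a weakly decreasing list of positive integers. -/
def IsPartition (l : List ℕ) : Prop := l.Pairwise (· ≥ ·) ∧ ∀ x ∈ l, 0 < x

/-- `μ ⊆ λ`. -/
def Contained (mu lam : List ℕ) : Prop := ∀ i, mu.getD i 0 ≤ lam.getD i 0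

/-- `T` is a skew supertableau on the cell set `C` over the marked alphabet `Fin NA`
(letters in their natural order), where `prm r = true` means the letter `r` is primed:
entries weakly increase along rows and down columns, no two equal unprimed entries lie
in the same column, and no two equal primed entries lie in the same row. -/
def IsSuperTab {NA : ℕ} (C : Finset (ℕ × ℕ)) (prm : Fin NA → Bool)
    (T : {p // p ∈ C} → Fin NA) : Prop :=
  (∀ u v : {p // p ∈ C}, u.1.1 = v.1.1 → u.1.2 ≤ v.1.2 → T u ≤ T v) ∧
  (∀ u v : {p // p ∈ C}, u.1.2 = v.1.2 → u.1.1 ≤ v.1.1 → T u ≤ T v) ∧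
  (∀ u v : {p // p ∈ C}, u.1.2 = v.1.2 → u.1.1 ≠ v.1.1 → prm (T u) = false → T u ≠ T v) ∧
  (∀ u v : {p // p ∈ C}, u.1.1 = v.1.1 → u.1.2 ≠ v.1.2 → prm (T u) = true → T u ≠ T v)

open Classical in
/-- Generic weighted sum over all skew supertableaux on `C`: the weight of the letter `r`
placed in a box of content `c` is `w r c`. -/
noncomputable def tabSum {NA : ℕ} (C : Finset (ℕ × ℕ)) (prm : Fin NA → Bool)
    (w : Fin NA → ℤ → A) : A :=
  ∑ T ∈ Finset.univ.filter (fun T : {p // p ∈ C} → Fin NA => IsSuperTab C prm T),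
    ∏ u : {p // p ∈ C}, w (T u) (content u.1)

/-- The (1-based) index of the letter `r` among the letters with the same marking:
if `r` is the k-th smallest unprimed letter then `idx prm r = k`, and similarly
for primed letters. -/
def idx {NA : ℕ} (prm : Fin NA → Bool) (r : Fin NA) : ℕ :=
  (Finset.univ.filter fun r' => prm r' = prm r ∧ r' ≤ r).card

/-- `σ(r) = #{i ∈ M : i ≤ r} - #{j ∈ N : j ≤ r}`, plus `1` if `r` is primed. -/
def sigma {NA : ℕ} (prm : Fin NA → Bool) (r : Fin NA) : ℤ :=
  ((Finset.univ.filter fun r' : Fin NA => prm r' = false ∧ r' ≤ r).card : ℤ)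
    - ((Finset.univ.filter fun r' : Fin NA => prm r' = true ∧ r' ≤ r).card : ℤ)
    + (if prm r then 1 else 0)

/-- Ninth-variation weights: the k-th unprimed letter in a box of content `c`
carries weight `X k c`, and the ℓ-th primed letter carries `Y ℓ c`. -/
def wNinth {m n NA : ℕ} (prm : Fin NA → Bool) (X : Fin m → ℤ → A) (Y : Fin n → ℤ → A) :
    Fin NA → ℤ → A := fun r c =>
  if prm r then (if h : idx prm r - 1 < n then Y ⟨idx prm r - 1, h⟩ c else 0)
  else (if h : idx prm r - 1 < m then X ⟨idx prm r - 1, h⟩ c else 0)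

/-- Factorial supersymmetric weights: the k-th unprimed letter `r` in a box of content `c`
carries weight `x k + a (σ(r) + c)`, and the ℓ-th primed letter `r` carries
`y ℓ - a (σ(r) + c)`. -/
def wFact {m n NA : ℕ} (prm : Fin NA → Bool) (x : Fin m → A) (y : Fin n → A) (a : ℤ → A) :
    Fin NA → ℤ → A := fun r c =>
  if prm r then
    (if h : idx prm r - 1 < n then y ⟨idx prm r - 1, h⟩ else 0) - a (sigma prm r + c)
  else
    (if h : idx prm r - 1 < m then x ⟨idx prm r - 1, h⟩ else 0) + a (sigma prm r + c)

/-- The marked alphabet `1 < 2 < ⋯ < m < 1′ < 2′ < ⋯ < n′`. -/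
def prmFirst (m n : ℕ) : Fin (m + n) → Bool := fun r => decide (m ≤ (r : ℕ))

/-- The classical (first variation) supersymmetric skew Schur function `s_{λ/μ}(x,y)`. -/
noncomputable def superSchur (lam mu : List ℕ) {m n : ℕ} (x : Fin m → A) (y : Fin n → A) : A :=
  tabSum (cells lam mu) (prmFirst m n) (wNinth (prmFirst m n) (fun k _ => x k) (fun l _ => y l))

/-- The row (counted from the top, 0-based) of the box of content `c` in the canonical
realisation of the segment of the cutting strip ending at content `d`:
the number of vertical steps strictly between `c` and `d`. -/
noncomputable def ribRow (dir : ℤ → Bool) (d c : ℤ) : ℕ :=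
  ((Finset.Ioc c d).filter fun c' => dir c' = true).card

/-- The shift `m(p,q)`: the content (within the cutting strip) of the box of the ribbon
`φ_{ad}` that lies on the main diagonal of the skew diagram whose outer rim is `φ_{ad}`. -/
noncomputable def mShift (dir : ℤ → Bool) (a d : ℤ) : ℤ := a + (ribRow dir d a : ℤ)

/-- The ribbon `φ_{ad}` of the cutting strip, realised canonically as a skew diagram
in its own right (its box of cutting-strip content `c` gets standard content
`c - mShift dir a d`). -/
noncomputable def ribbonCells (dir : ℤ → Bool) (a d : ℤ) : Finset (ℕ × ℕ) :=
  (Finset.Icc a d).image fun c =>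
    (ribRow dir d c, (c + (ribRow dir d c : ℤ) - mShift dir a d).toNat)

/-- The cell set `S` coincides in shape and contents with the segment `φ_{ab}` of the
cutting strip described by `dir` (where `dir c = true` iff the box of content `c - 1`
lies below the box of content `c`, and `dir c = false` iff it lies to its left). -/
def StripMatches (dir : ℤ → Bool) (a b : ℤ) (S : Finset (ℕ × ℕ)) : Prop :=
  (∀ c : ℤ, (a ≤ c ∧ c ≤ b) ↔ ∃ u ∈ S, content u = c) ∧
  (∀ u ∈ S, ∀ v ∈ S, content u = content v → u = v) ∧
  (∀ u ∈ S, ∀ v ∈ S, content v = content u + 1 →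
    if dir (content v) then v.1 + 1 = u.1 ∧ v.2 = u.2 else v.1 = u.1 ∧ u.2 + 1 = v.2)

/-- `(dir, ab, θ)` is an outside decomposition of `F^{λ/μ}`: the strips `θ p` are
pairwise disjoint with union the whole diagram, each `θ p` coincides in shape
and contents with the segment `φ_{(ab p).1, (ab p).2}` of the common cutting strip
described by `dir`, the starting box of each strip lies on the left or bottom boundary,
the ending box of each strip lies on the right or top boundary, and the cutting strip
contains a box of every relevant content occurring in the diagram. -/
def OutsideDecomp (lam mu : List ℕ) {s : ℕ} (dir : ℤ → Bool)
    (ab : Fin s → ℤ × ℤ) (θ : Fin s → Finset (ℕ × ℕ)) : Prop :=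
  (∀ p q : Fin s, p ≠ q → Disjoint (θ p) (θ q)) ∧
  (Finset.univ.biUnion θ = cells lam mu) ∧
  (∀ p : Fin s, StripMatches dir (ab p).1 (ab p).2 (θ p)) ∧
  (∀ p : Fin s, ∀ u ∈ θ p, content u = (ab p).1 →
    u.2 = 0 ∨ (u.1, u.2 - 1) ∉ cells lam mu ∨ (u.1 + 1, u.2) ∉ cells lam mu) ∧
  (∀ p : Fin s, ∀ u ∈ θ p, content u = (ab p).2 →
    (u.1, u.2 + 1) ∉ cells lam mu ∨ u.1 = 0 ∨ (u.1 - 1, u.2) ∉ cells lam mu) ∧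
  (∀ p q : Fin s, ∀ c : ℤ, (ab p).1 ≤ c → c ≤ (ab q).2 → ∃ u ∈ cells lam mu, content u = c)

/-- Two boxes are edgewise adjacent. -/
def CellAdj (u v : ℕ × ℕ) : Prop :=
  (u.1 = v.1 ∧ (u.2 + 1 = v.2 ∨ v.2 + 1 = u.2)) ∨
  (u.2 = v.2 ∧ (u.1 + 1 = v.1 ∨ v.1 + 1 = u.1))

/-- `C` is edgewise connected. -/
def ConnectedCells (C : Finset (ℕ × ℕ)) : Prop :=
  ∀ u ∈ C, ∀ v ∈ C,
    Relation.ReflTransGen (fun p q => p ∈ C ∧ q ∈ C ∧ CellAdj p q) u v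

/-- `C` contains no 2×2 block of boxes. -/
def NoTwoByTwo (C : Finset (ℕ × ℕ)) : Prop :=
  ∀ i j : ℕ, ¬((i, j) ∈ C ∧ (i + 1, j) ∈ C ∧ (i, j + 1) ∈ C ∧ (i + 1, j + 1) ∈ C)

/-- `C` is a ribbon: nonempty, edgewise connected, with no 2×2 block of boxes. -/
def IsRibbon (C : Finset (ℕ × ℕ)) : Prop :=
  C.Nonempty ∧ ConnectedCells C ∧ NoTwoByTwo C

/-- `T` is an ordered Young tableau on `C`: entries weakly increase along rows and
down columns, and strictly increase down diagonals. -/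
def IsOYT {nL : ℕ} (C : Finset (ℕ × ℕ)) (T : {p // p ∈ C} → Fin nL) : Prop :=
  (∀ u v : {p // p ∈ C}, u.1.1 = v.1.1 → u.1.2 ≤ v.1.2 → T u ≤ T v) ∧
  (∀ u v : {p // p ∈ C}, u.1.2 = v.1.2 → u.1.1 ≤ v.1.1 → T u ≤ T v) ∧
  (∀ u v : {p // p ∈ C}, u.1.1 + 1 = v.1.1 → u.1.2 + 1 = v.1.2 → T u < T v)

/-- The number `h(T)` of horizontally adjacent pairs of equal entries. -/
def horizPairs {nL : ℕ} (C : Finset (ℕ × ℕ)) (T : {p // p ∈ C} → Fin nL) : ℕ :=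
  (Finset.univ.filter fun uv : {p // p ∈ C} × {p // p ∈ C} =>
    uv.1.1.1 = uv.2.1.1 ∧ uv.1.1.2 + 1 = uv.2.1.2 ∧ T uv.1 = T uv.2).card

/-- The number `v(T)` of vertically adjacent pairs of equal entries. -/
def vertPairs {nL : ℕ} (C : Finset (ℕ × ℕ)) (T : {p // p ∈ C} → Fin nL) : ℕ :=
  (Finset.univ.filter fun uv : {p // p ∈ C} × {p // p ∈ C} =>
    uv.1.1.2 = uv.2.1.2 ∧ uv.1.1.1 + 1 = uv.2.1.1 ∧ T uv.1 = T uv.2).card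

open Classical in
/-- Bachmann's ordered-Young-tableau Schur function of the cell set `C`. -/
noncomputable def bacSum (C : Finset (ℕ × ℕ)) {nL : ℕ} (F : Fin nL → ℤ → A) (t : A) : A :=
  ∑ T ∈ Finset.univ.filter (fun T : {p // p ∈ C} → Fin nL => IsOYT C T),
    t ^ vertPairs C T * (1 - t) ^ horizPairs C T *
      ∏ u : {p // p ∈ C}, F (T u) (content u.1)

/-- Molev's factorial supersymmetric weights on the alphabet
`n′ < ⋯ < 2′ < 1′ < 1 < 2 < ⋯ < m` (position `p < n` is the letter `(n-p)′`,
position `n + k - 1` is the letter `k`): the letter `k` in a box of content `c`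
carries weight `x k + a (k + c)` and the letter `ℓ′` carries `y ℓ - a (ℓ + c)`. -/
def wMol {m n : ℕ} (x : Fin m → A) (y : Fin n → A) (a : ℤ → A) : Fin (m + n) → ℤ → A :=
  fun r c =>
    if h : (r : ℕ) < n then
      y ⟨n - 1 - (r : ℕ), by omega⟩ - a (((n : ℤ) - ((r : ℕ) : ℤ)) + c)
    else
      x ⟨(r : ℕ) - n, by have := r.isLt; omega⟩ + a ((((r : ℕ) : ℤ) - (n : ℤ) + 1) + c)


/-! ### Auxiliary machinery -/

open Classical

section Walks

/-- successor step: go up if possible, else right. -/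
def nxt (D : Finset (ℕ × ℕ)) (p : ℕ × ℕ) : Option (ℕ × ℕ) :=
  if 0 < p.1 ∧ (p.1 - 1, p.2) ∈ D then some (p.1 - 1, p.2)
  else if (p.1, p.2 + 1) ∈ D then some (p.1, p.2 + 1)
  else none

/-- predecessor step: go down if possible, else left. -/
def prv (D : Finset (ℕ × ℕ)) (p : ℕ × ℕ) : Option (ℕ × ℕ) :=
  if (p.1 + 1, p.2) ∈ D then some (p.1 + 1, p.2)
  else if 0 < p.2 ∧ (p.1, p.2 - 1) ∈ D then some (p.1, p.2 - 1)
  else none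

def walk (f : ℕ × ℕ → Option (ℕ × ℕ)) : ℕ → ℕ × ℕ → ℕ × ℕ
  | 0, p => p
  | (k+1), p => match f p with
    | none => p
    | some q => walk f k q

/-- `D` has no cell with both an upper and a right neighbour, nor a cell with
both a lower and a left neighbour. -/
structure GoodD (D : Finset (ℕ × ℕ)) : Prop where
  noUR : ∀ p ∈ D, ¬((0 < p.1 ∧ (p.1 - 1, p.2) ∈ D) ∧ (p.1, p.2 + 1) ∈ D)
  noDL : ∀ p ∈ D, ¬((p.1 + 1, p.2) ∈ D ∧ (0 < p.2 ∧ (p.1, p.2 - 1) ∈ D))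

variable {D : Finset (ℕ × ℕ)}

lemma nxt_mem {p q : ℕ × ℕ} (h : nxt D p = some q) : q ∈ D := by
  unfold nxt at h
  split_ifs at h with h1 h2 <;> simp_all

lemma prv_mem {p q : ℕ × ℕ} (h : prv D p = some q) : q ∈ D := by
  unfold prv at h
  split_ifs at h with h1 h2 <;> simp_all

lemma nxt_content {p q : ℕ × ℕ} (h : nxt D p = some q) : content q = content p + 1 := by
  unfold nxt at h
  split_ifs at h with h1 h2
  · obtain ⟨h1, _⟩ := h1
    cases h; unfold content; push_cast; omega
  · cases h; unfold content; push_cast; omega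

lemma prv_content {p q : ℕ × ℕ} (h : prv D p = some q) : content q = content p - 1 := by
  unfold prv at h
  split_ifs at h with h1 h2
  · cases h; unfold content; push_cast; omega
  · obtain ⟨h2, _⟩ := h2
    cases h; unfold content; push_cast; omega

lemma nxt_prv (hD : GoodD D) {p q : ℕ × ℕ} (hp : p ∈ D) (h : nxt D p = some q) :
    prv D q = some p := by
  unfold nxt at h
  split_ifs at h with h1 h2
  · -- q = above p
    cases h
    unfold prv
    have : (p.1 - 1 + 1, p.2) = p := by obtain ⟨p1, p2⟩ := p; simp; omega
    rw [if_pos (by rw [this]; exact hp)]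
    rw [this]
  · -- q = right p
    cases h
    have hq : (p.1, p.2 + 1) ∈ D := h2
    unfold prv
    rw [if_neg, if_pos]
    · simp
    · refine ⟨by omega, ?_⟩; simpa using hp
    · intro hb
      exact hD.noDL (p.1, p.2 + 1) hq ⟨hb, by omega, by simpa using hp⟩

lemma prv_nxt (hD : GoodD D) {p q : ℕ × ℕ} (hp : p ∈ D) (h : prv D p = some q) :
    nxt D q = some p := by
  unfold prv at h
  split_ifs at h with h1 h2
  · cases h
    unfold nxt
    rw [if_pos]
    · simp
    · exact ⟨by omega, by simpa using hp⟩
  · cases h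
    have hq : (p.1, p.2 - 1) ∈ D := h2.2
    unfold nxt
    rw [if_neg, if_pos]
    · congr 1; obtain ⟨p1,p2⟩ := p; simp; omega
    · have : (p.1, p.2 - 1 + 1) = p := by obtain ⟨p1,p2⟩ := p; simp; omega
      rw [this]; exact hp
    · intro hup
      refine hD.noUR (p.1, p.2 - 1) hq ⟨hup, ?_⟩
      have : (p.1, p.2 - 1 + 1) = p := by obtain ⟨p1,p2⟩ := p; simp; omega
      rw [this]; exact hp

/-- generic termination lemma for fueled walks with a decreasing measure. -/
lemma walk_terminal {f : ℕ × ℕ → Option (ℕ × ℕ)} {m : ℕ × ℕ → ℕ}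
    (hdec : ∀ p q, f p = some q → m q < m p) :
    ∀ (k : ℕ) (p : ℕ × ℕ), m p ≤ k → f (walk f k p) = none := by
  intro k
  induction k with
  | zero =>
    intro p hp
    cases hf : f p with
    | none => simpa [walk] using hf
    | some q => exact absurd (hdec p q hf) (by omega)
  | succ k ih =>
    intro p hp
    cases hf : f p with
    | none => simpa [walk, hf] using hf
    | some q =>
      have := hdec p q hf
      simpa [walk, hf] using ih q (by omega)

lemma walk_none {f : ℕ × ℕ → Option (ℕ × ℕ)} {p : ℕ × ℕ} (h : f p = none) :
    ∀ k, walk f k p = p := by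
  intro k; cases k <;> simp [walk, h]

lemma walk_succ_eq {f : ℕ × ℕ → Option (ℕ × ℕ)} {m : ℕ × ℕ → ℕ}
    (hdec : ∀ p q, f p = some q → m q < m p) :
    ∀ (k : ℕ) (p : ℕ × ℕ), m p ≤ k → walk f (k+1) p = walk f k p := by
  intro k
  induction k with
  | zero =>
    intro p hp
    cases hf : f p with
    | none => simp [walk, hf]
    | some q => exact absurd (hdec p q hf) (by omega)
  | succ k ih =>
    intro p hp
    cases hf : f p with
    | none => simp [walk, hf]
    | some q =>
      have := hdec p q hf
      simp only [walk, hf]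
      exact ih q (by omega)

lemma walk_mem {f : ℕ × ℕ → Option (ℕ × ℕ)}
    (hf : ∀ p q, f p = some q → q ∈ D) :
    ∀ (k : ℕ) (p : ℕ × ℕ), p ∈ D → walk f k p ∈ D := by
  intro k
  induction k with
  | zero => intro p hp; simpa [walk] using hp
  | succ k ih =>
    intro p hp
    cases hq : f p with
    | none => simpa [walk, hq] using hp
    | some q => simpa [walk, hq] using ih q (hf p q hq)

/-- a walk preserves any function invariant under steps. -/
lemma walk_invariant {f : ℕ × ℕ → Option (ℕ × ℕ)} {g : ℕ × ℕ → ℕ × ℕ}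
    (hg : ∀ p q, p ∈ D → f p = some q → g q = g p)
    (hf : ∀ p q, f p = some q → q ∈ D) :
    ∀ (k : ℕ) (p : ℕ × ℕ), p ∈ D → g (walk f k p) = g p := by
  intro k
  induction k with
  | zero => intro p hp; simp [walk]
  | succ k ih =>
    intro p hp
    cases hq : f p with
    | none => simp [walk, hq]
    | some q =>
      simp only [walk, hq]
      rw [ih q (hf p q hq), hg p q hp hq]

noncomputable def mUp (D : Finset (ℕ × ℕ)) (p : ℕ × ℕ) : ℕ :=
  (D.filter fun q => content p < content q).card

noncomputable def mDn (D : Finset (ℕ × ℕ)) (p : ℕ × ℕ) : ℕ :=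
  (D.filter fun q => content q < content p).card

lemma mUp_dec : ∀ p q, nxt D p = some q → mUp D q < mUp D p := by
  intro p q h
  have hq : q ∈ D := nxt_mem h
  have hc : content q = content p + 1 := nxt_content h
  apply Finset.card_lt_card
  constructor
  · intro r hr
    simp only [Finset.mem_filter, mUp] at hr ⊢
    exact ⟨hr.1, by omega⟩
  · intro hsub
    have : q ∈ D.filter fun r => content p < content r := by
      simp only [Finset.mem_filter]; exact ⟨hq, by omega⟩
    have := hsub this
    simp only [Finset.mem_filter] at this
    omega

lemma mDn_dec : ∀ p q, prv D p = some q → mDn D q < mDn D p := by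
  intro p q h
  have hq : q ∈ D := prv_mem h
  have hc : content q = content p - 1 := prv_content h
  apply Finset.card_lt_card
  constructor
  · intro r hr
    simp only [Finset.mem_filter, mDn] at hr ⊢
    exact ⟨hr.1, by omega⟩
  · intro hsub
    have : q ∈ D.filter fun r => content r < content p := by
      simp only [Finset.mem_filter]; exact ⟨hq, by omega⟩
    have := hsub this
    simp only [Finset.mem_filter] at this
    omega

lemma mUp_le_card (p : ℕ × ℕ) : mUp D p ≤ D.card := Finset.card_filter_le _ _

lemma mDn_le_card (p : ℕ × ℕ) : mDn D p ≤ D.card := Finset.card_filter_le _ _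

/-- topmost endpoint of the strip through `p`. -/
noncomputable def TopE (D : Finset (ℕ × ℕ)) (p : ℕ × ℕ) : ℕ × ℕ := walk (nxt D) D.card p

/-- bottommost endpoint of the strip through `p`. -/
noncomputable def BotE (D : Finset (ℕ × ℕ)) (p : ℕ × ℕ) : ℕ × ℕ := walk (prv D) D.card p

lemma TopE_mem {p : ℕ × ℕ} (hp : p ∈ D) : TopE D p ∈ D :=
  walk_mem (fun _ _ h => nxt_mem h) _ p hp

lemma BotE_mem {p : ℕ × ℕ} (hp : p ∈ D) : BotE D p ∈ D :=
  walk_mem (fun _ _ h => prv_mem h) _ p hp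

lemma nxt_TopE (p : ℕ × ℕ) : nxt D (TopE D p) = none :=
  walk_terminal mUp_dec _ p (mUp_le_card p)

lemma prv_BotE (p : ℕ × ℕ) : prv D (BotE D p) = none :=
  walk_terminal mDn_dec _ p (mDn_le_card p)

lemma TopE_of_none {p : ℕ × ℕ} (h : nxt D p = none) : TopE D p = p := walk_none h _

lemma BotE_of_none {p : ℕ × ℕ} (h : prv D p = none) : BotE D p = p := walk_none h _

lemma TopE_step {p q : ℕ × ℕ} (h : nxt D p = some q) : TopE D p = TopE D q := by
  have hq : q ∈ D := nxt_mem h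
  have hlt : mUp D q < mUp D p := mUp_dec p q h
  have hcard : 1 ≤ D.card := by
    rw [Finset.one_le_card]; exact ⟨q, hq⟩
  obtain ⟨k, hk⟩ : ∃ k, D.card = k + 1 := ⟨D.card - 1, by omega⟩
  have hb : mUp D q ≤ k := by have := mUp_le_card (D := D) p; omega
  calc TopE D p = walk (nxt D) (k+1) p := by rw [TopE, hk]
    _ = walk (nxt D) k q := by simp [walk, h]
    _ = walk (nxt D) (k+1) q := (walk_succ_eq mUp_dec k q hb).symm
    _ = TopE D q := by rw [TopE, hk]

lemma BotE_step {p q : ℕ × ℕ} (h : prv D p = some q) : BotE D p = BotE D q := by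
  have hq : q ∈ D := prv_mem h
  have hlt : mDn D q < mDn D p := mDn_dec p q h
  have hcard : 1 ≤ D.card := by
    rw [Finset.one_le_card]; exact ⟨q, hq⟩
  obtain ⟨k, hk⟩ : ∃ k, D.card = k + 1 := ⟨D.card - 1, by omega⟩
  have hb : mDn D q ≤ k := by have := mDn_le_card (D := D) p; omega
  calc BotE D p = walk (prv D) (k+1) p := by rw [BotE, hk]
    _ = walk (prv D) k q := by simp [walk, h]
    _ = walk (prv D) (k+1) q := (walk_succ_eq mDn_dec k q hb).symm
    _ = BotE D q := by rw [BotE, hk]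

lemma TopE_BotE (hD : GoodD D) {p : ℕ × ℕ} (hp : p ∈ D) :
    TopE D (BotE D p) = TopE D p := by
  unfold BotE
  exact walk_invariant
    (fun u v hu hv => TopE_step (prv_nxt hD hu hv))
    (fun _ _ h => prv_mem h) _ p hp

lemma BotE_TopE (hD : GoodD D) {p : ℕ × ℕ} (hp : p ∈ D) :
    BotE D (TopE D p) = BotE D p := by
  unfold TopE
  exact walk_invariant
    (fun u v hu hv => BotE_step (nxt_prv hD hu hv))
    (fun _ _ h => nxt_mem h) _ p hp

end Walks

section Geometry

lemma mem_cells {lam mu : List ℕ} {p : ℕ × ℕ} :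
    p ∈ cells lam mu ↔ p.1 < lam.length ∧ mu.getD p.1 0 ≤ p.2 ∧ p.2 < lam.getD p.1 0 := by
  obtain ⟨i, j⟩ := p
  simp only [cells, Finset.mem_biUnion, Finset.mem_range, Finset.mem_image, Finset.mem_Ico]
  constructor
  · rintro ⟨i', hi', j', hj', heq⟩
    cases heq
    exact ⟨hi', hj'⟩
  · rintro ⟨h1, h2, h3⟩
    exact ⟨i, h1, j, ⟨h2, h3⟩, rfl⟩

lemma getD_anti {l : List ℕ} (hl : l.Pairwise (· ≥ ·)) {i j : ℕ} (hij : i ≤ j) :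
    l.getD j 0 ≤ l.getD i 0 := by
  by_cases hj : j < l.length
  · have hi : i < l.length := lt_of_le_of_lt hij hj
    rw [List.getD_eq_getElem l 0 hj, List.getD_eq_getElem l 0 hi]
    rcases eq_or_lt_of_le hij with rfl | hlt
    · exact le_refl _
    · exact List.Pairwise.rel_get_of_lt hl hlt
  · rw [List.getD_eq_default l 0 (by omega)]
    exact Nat.zero_le _

/-- The closure properties of a skew diagram that we need. -/
structure SkewShape (C : Finset (ℕ × ℕ)) : Prop where
  rowI : ∀ i j1 j2 j, (i, j1) ∈ C → (i, j2) ∈ C → j1 ≤ j → j ≤ j2 → (i, j) ∈ C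
  colI : ∀ i1 i2 i j, (i1, j) ∈ C → (i2, j) ∈ C → i1 ≤ i → i ≤ i2 → (i, j) ∈ C
  dUR : ∀ i j, 0 < i → (i - 1, j) ∈ C → (i, j + 1) ∈ C → (i - 1, j + 1) ∈ C
  dDL : ∀ i j, 0 < j → (i + 1, j) ∈ C → (i, j - 1) ∈ C → (i + 1, j - 1) ∈ C

lemma skewShape_cells {lam mu : List ℕ} (hlam : IsPartition lam) (hmu : IsPartition mu) :
    SkewShape (cells lam mu) := by
  have hl := hlam.1
  have hm := hmu.1
  constructor
  · intro i j1 j2 j h1 h2 hj1 hj2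
    rw [mem_cells] at h1 h2 ⊢
    simp only at *
    omega
  · intro i1 i2 i j h1 h2 hi1 hi2
    rw [mem_cells] at h1 h2 ⊢
    simp only at *
    have e1 : mu.getD i 0 ≤ mu.getD i1 0 := getD_anti hm hi1
    have e2 : lam.getD i2 0 ≤ lam.getD i 0 := getD_anti hl hi2
    omega
  · intro i j hi h1 h2
    rw [mem_cells] at h1 h2 ⊢
    simp only at *
    have e2 : lam.getD i 0 ≤ lam.getD (i - 1) 0 := getD_anti hl (by omega)
    omega
  · intro i j hj h1 h2
    rw [mem_cells] at h1 h2 ⊢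
    simp only at *
    have e1 : mu.getD (i + 1) 0 ≤ mu.getD i 0 := getD_anti hm (by omega)
    omega

end Geometry

section SwapDefs

variable {NA : ℕ}

/-- neighbour predicates -/
def bD (D : Finset (ℕ × ℕ)) (p : ℕ × ℕ) : Prop := (p.1 + 1, p.2) ∈ D
def lD (D : Finset (ℕ × ℕ)) (p : ℕ × ℕ) : Prop := 0 < p.2 ∧ (p.1, p.2 - 1) ∈ D
def aD (D : Finset (ℕ × ℕ)) (p : ℕ × ℕ) : Prop := 0 < p.1 ∧ (p.1 - 1, p.2) ∈ D
def rD (D : Finset (ℕ × ℕ)) (p : ℕ × ℕ) : Prop := (p.1, p.2 + 1) ∈ D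

lemma nxt_none_iff {D : Finset (ℕ × ℕ)} {p : ℕ × ℕ} :
    nxt D p = none ↔ ¬ aD D p ∧ ¬ rD D p := by
  unfold nxt aD rD
  split_ifs with h1 h2 <;> simp_all

lemma prv_none_iff {D : Finset (ℕ × ℕ)} {p : ℕ × ℕ} :
    prv D p = none ↔ ¬ bD D p ∧ ¬ lD D p := by
  unfold prv bD lD
  split_ifs with h1 h2 <;> simp_all

variable (C : Finset (ℕ × ℕ))

/-- the cells carrying letter `a` or `b`. -/
noncomputable def DD (a b : Fin NA) (T : {p // p ∈ C} → Fin NA) : Finset (ℕ × ℕ) :=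
  C.filter fun p => ∃ h : p ∈ C, T ⟨p, h⟩ = a ∨ T ⟨p, h⟩ = b

/-- the cells carrying letter `v`. -/
noncomputable def DV (v : Fin NA) (T : {p // p ∈ C} → Fin NA) : Finset (ℕ × ℕ) :=
  C.filter fun p => ∃ h : p ∈ C, T ⟨p, h⟩ = v

/-- the swap bijection, sending a tableau for `⋯ < a < a+1' < ⋯` to a tableau for
`⋯ < a' < a+1 < ⋯` (where `b = a+1`). -/
noncomputable def Phi (a b : Fin NA) (T : {p // p ∈ C} → Fin NA) : {p // p ∈ C} → Fin NA :=
  fun u =>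
    if u.1 ∈ DD C a b T then
      if bD (DD C a b T) u.1 ∨
          (¬ bD (DD C a b T) u.1 ∧ ¬ lD (DD C a b T) u.1 ∧ TopE (DD C a b T) u.1 ∈ DV C b T)
      then a else b
    else T u

/-- the inverse swap bijection. -/
noncomputable def Psi (a b : Fin NA) (S : {p // p ∈ C} → Fin NA) : {p // p ∈ C} → Fin NA :=
  fun u =>
    if u.1 ∈ DD C a b S then
      if aD (DD C a b S) u.1 ∨
          (¬ aD (DD C a b S) u.1 ∧ ¬ rD (DD C a b S) u.1 ∧ BotE (DD C a b S) u.1 ∈ DV C a S)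
      then b else a
    else S u

variable {C}

lemma DD_sub {a b : Fin NA} {T : {p // p ∈ C} → Fin NA} {p : ℕ × ℕ}
    (h : p ∈ DD C a b T) : p ∈ C := Finset.mem_of_mem_filter _ h

lemma DV_sub {v : Fin NA} {T : {p // p ∈ C} → Fin NA} {p : ℕ × ℕ}
    (h : p ∈ DV C v T) : p ∈ C := Finset.mem_of_mem_filter _ h

lemma mem_DD {a b : Fin NA} {T : {p // p ∈ C} → Fin NA} {p : ℕ × ℕ} (hp : p ∈ C) :
    p ∈ DD C a b T ↔ (T ⟨p, hp⟩ = a ∨ T ⟨p, hp⟩ = b) := by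
  unfold DD
  rw [Finset.mem_filter]
  constructor
  · rintro ⟨-, h, hv⟩; exact hv
  · intro hv; exact ⟨hp, hp, hv⟩

lemma mem_DV {v : Fin NA} {T : {p // p ∈ C} → Fin NA} {p : ℕ × ℕ} (hp : p ∈ C) :
    p ∈ DV C v T ↔ T ⟨p, hp⟩ = v := by
  unfold DV
  rw [Finset.mem_filter]
  constructor
  · rintro ⟨-, h, hv⟩; exact hv
  · intro hv; exact ⟨hp, hp, hv⟩

end SwapDefs

section FinFacts

variable {NA : ℕ} {a b : Fin NA}

lemma a_ne_b (hab : (b : ℕ) = (a : ℕ) + 1) : a ≠ b := by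
  intro h; rw [h] at hab; omega

lemma a_lt_b (hab : (b : ℕ) = (a : ℕ) + 1) : a < b := by
  rw [Fin.lt_def]; omega

lemma a_le' (hab : (b : ℕ) = (a : ℕ) + 1) {t : Fin NA} (h : t = a ∨ t = b) : a ≤ t := by
  rcases h with rfl | rfl
  · exact le_refl _
  · rw [Fin.le_def]; omega

lemma le_b' (hab : (b : ℕ) = (a : ℕ) + 1) {t : Fin NA} (h : t = a ∨ t = b) : t ≤ b := by
  rcases h with rfl | rfl
  · rw [Fin.le_def]; omega
  · exact le_refl _

lemma fin_between (hab : (b : ℕ) = (a : ℕ) + 1) {t : Fin NA} (h1 : a ≤ t) (h2 : t ≤ b) :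
    t = a ∨ t = b := by
  rw [Fin.le_def] at h1 h2
  rcases Nat.eq_or_lt_of_le h1 with h | h
  · left; exact (Fin.ext h.symm : t = a).symm ▸ rfl
  · right; apply Fin.ext; omega

lemma fin_out (hab : (b : ℕ) = (a : ℕ) + 1) {t : Fin NA} (h1 : t ≠ a) (h2 : t ≠ b) :
    t < a ∨ b < t := by
  rw [Fin.lt_def, Fin.lt_def]
  rw [← Fin.val_ne_iff] at h1 h2
  omega

end FinFacts

section ForwardFacts

variable {NA : ℕ} {C : Finset (ℕ × ℕ)} {a b : Fin NA} {prm : Fin NA → Bool}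
  {T : {p // p ∈ C} → Fin NA}

/-- a cell with letter `b` (primed) has no right neighbour in `D`. -/
lemma not_b_right (hab : (b : ℕ) = (a : ℕ) + 1) (hpb : prm b = true)
    (hT : IsSuperTab C prm T) {p : ℕ × ℕ} (hp : p ∈ C) (hb : T ⟨p, hp⟩ = b)
    (hr : rD (DD C a b T) p) : False := by
  have hrC : (p.1, p.2 + 1) ∈ C := DD_sub hr
  have hv := (mem_DD hrC).1 hr
  have hle : T ⟨p, hp⟩ ≤ T ⟨(p.1, p.2 + 1), hrC⟩ := hT.1 _ _ rfl (by simp)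
  have hrb : T ⟨(p.1, p.2 + 1), hrC⟩ = b := by
    rcases hv with h | h
    · rw [hb, h] at hle; exact absurd hle (by rw [Fin.le_def]; omega)
    · exact h
  exact hT.2.2.2 ⟨p, hp⟩ ⟨(p.1, p.2 + 1), hrC⟩ rfl (by simp) (by rw [hb, hpb])
    (by rw [hb, hrb])

/-- a cell of `D` with an upper neighbour in `D` carries letter `b`. -/
lemma val_b_of_above (hab : (b : ℕ) = (a : ℕ) + 1) (hpa : prm a = false)
    (hT : IsSuperTab C prm T) {p : ℕ × ℕ} (hp : p ∈ DD C a b T)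
    (hup : aD (DD C a b T) p) : T ⟨p, DD_sub hp⟩ = b := by
  have htC : (p.1 - 1, p.2) ∈ C := DD_sub hup.2
  have htv := (mem_DD htC).1 hup.2
  have hle : T ⟨(p.1 - 1, p.2), htC⟩ ≤ T ⟨p, DD_sub hp⟩ := hT.2.1 _ _ rfl (by simp)
  rcases (mem_DD (DD_sub hp)).1 hp with hpa' | hpb'
  · exfalso
    have hta : T ⟨(p.1 - 1, p.2), htC⟩ = a := by
      rcases htv with h | h
      · exact h
      · rw [h, hpa'] at hle; exact absurd hle (by rw [Fin.le_def]; omega)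
    exact hT.2.2.1 ⟨(p.1 - 1, p.2), htC⟩ ⟨p, DD_sub hp⟩ rfl
      (show p.1 - 1 ≠ p.1 by have := hup.1; omega) (by rw [hta, hpa]) (by rw [hta, hpa'])
  · exact hpb'

/-- the left neighbour in `D` of a cell of `D` carries letter `a`. -/
lemma val_a_of_left (hab : (b : ℕ) = (a : ℕ) + 1) (hpb : prm b = true)
    (hT : IsSuperTab C prm T) {p : ℕ × ℕ} (hp : p ∈ DD C a b T)
    (hl : lD (DD C a b T) p) : T ⟨(p.1, p.2 - 1), DD_sub hl.2⟩ = a := by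
  rcases (mem_DD (DD_sub hl.2)).1 hl.2 with h | h
  · exact h
  · exfalso
    refine not_b_right hab hpb hT (DD_sub hl.2) h ?_
    unfold rD
    have hh : (p.1, p.2 - 1 + 1) = p := by
      rw [show p.2 - 1 + 1 = p.2 from by have := hl.1; omega]
    rw [hh]; exact hp

lemma seg_row (hab : (b : ℕ) = (a : ℕ) + 1) (hC : SkewShape C)
    (hT : IsSuperTab C prm T) {p q : ℕ × ℕ} {j : ℕ} (hp : p ∈ DD C a b T)
    (hq : q ∈ DD C a b T) (h1 : p.1 = q.1) (h2 : p.2 ≤ j) (h3 : j ≤ q.2) :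
    (p.1, j) ∈ DD C a b T := by
  have hpC := DD_sub hp
  have hqC := DD_sub hq
  have hqC' : (p.1, q.2) ∈ C := by rw [h1]; exact (by simpa using hqC)
  have hmC : (p.1, j) ∈ C := hC.rowI p.1 p.2 q.2 j (by simpa using hpC) hqC' h2 h3
  have hle1 : T ⟨p, hpC⟩ ≤ T ⟨(p.1, j), hmC⟩ := hT.1 _ _ rfl h2
  have hle2 : T ⟨(p.1, j), hmC⟩ ≤ T ⟨q, hqC⟩ := hT.1 _ _ h1 h3
  rw [mem_DD hmC]
  exact fin_between hab
    (le_trans (a_le' hab ((mem_DD hpC).1 hp)) hle1)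
    (le_trans hle2 (le_b' hab ((mem_DD hqC).1 hq)))

lemma seg_col (hab : (b : ℕ) = (a : ℕ) + 1) (hC : SkewShape C)
    (hT : IsSuperTab C prm T) {p q : ℕ × ℕ} {i : ℕ} (hp : p ∈ DD C a b T)
    (hq : q ∈ DD C a b T) (h1 : p.2 = q.2) (h2 : p.1 ≤ i) (h3 : i ≤ q.1) :
    (i, p.2) ∈ DD C a b T := by
  have hpC := DD_sub hp
  have hqC := DD_sub hq
  have hqC' : (q.1, p.2) ∈ C := by rw [h1]; exact (by simpa using hqC)
  have hmC : (i, p.2) ∈ C := hC.colI p.1 q.1 i p.2 (by simpa using hpC) hqC' h2 h3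
  have hle1 : T ⟨p, hpC⟩ ≤ T ⟨(i, p.2), hmC⟩ := hT.2.1 _ _ rfl h2
  have hle2 : T ⟨(i, p.2), hmC⟩ ≤ T ⟨q, hqC⟩ := hT.2.1 _ _ h1 h3
  rw [mem_DD hmC]
  exact fin_between hab
    (le_trans (a_le' hab ((mem_DD hpC).1 hp)) hle1)
    (le_trans hle2 (le_b' hab ((mem_DD hqC).1 hq)))

lemma lD_of_row (hab : (b : ℕ) = (a : ℕ) + 1) (hC : SkewShape C)
    (hT : IsSuperTab C prm T) {p q : ℕ × ℕ} (hp : p ∈ DD C a b T)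
    (hq : q ∈ DD C a b T) (h1 : p.1 = q.1) (hlt : p.2 < q.2) : lD (DD C a b T) q := by
  refine ⟨by omega, ?_⟩
  have := seg_row hab hC hT hp hq h1 (by omega) (by omega : q.2 - 1 ≤ q.2)
  rwa [h1] at this

lemma rD_of_row (hab : (b : ℕ) = (a : ℕ) + 1) (hC : SkewShape C)
    (hT : IsSuperTab C prm T) {p q : ℕ × ℕ} (hp : p ∈ DD C a b T)
    (hq : q ∈ DD C a b T) (h1 : p.1 = q.1) (hlt : p.2 < q.2) : rD (DD C a b T) p := by
  have := seg_row hab hC hT hp hq h1 (by omega : p.2 ≤ p.2 + 1) (by omega)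
  exact this

lemma bD_of_col (hab : (b : ℕ) = (a : ℕ) + 1) (hC : SkewShape C)
    (hT : IsSuperTab C prm T) {p q : ℕ × ℕ} (hp : p ∈ DD C a b T)
    (hq : q ∈ DD C a b T) (h1 : p.2 = q.2) (hlt : p.1 < q.1) : bD (DD C a b T) p := by
  have := seg_col hab hC hT hp hq h1 (by omega : p.1 ≤ p.1 + 1) (by omega)
  exact this

lemma aD_of_col (hab : (b : ℕ) = (a : ℕ) + 1) (hC : SkewShape C)
    (hT : IsSuperTab C prm T) {p q : ℕ × ℕ} (hp : p ∈ DD C a b T)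
    (hq : q ∈ DD C a b T) (h1 : p.2 = q.2) (hlt : p.1 < q.1) : aD (DD C a b T) q := by
  refine ⟨by omega, ?_⟩
  have := seg_col hab hC hT hp hq h1 (by omega) (by omega : q.1 - 1 ≤ q.1)
  rwa [h1] at this

lemma good_D (hC : SkewShape C) (hab : (b : ℕ) = (a : ℕ) + 1) (hpa : prm a = false)
    (hpb : prm b = true) (hT : IsSuperTab C prm T) : GoodD (DD C a b T) := by
  constructor
  · rintro p hp ⟨hup, hr⟩
    exact not_b_right hab hpb hT (DD_sub hp) (val_b_of_above hab hpa hT hp hup) hr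
  · rintro p hp ⟨hb, hl⟩
    have hlC : (p.1, p.2 - 1) ∈ C := DD_sub hl.2
    have hbC : (p.1 + 1, p.2) ∈ C := DD_sub hb
    have hdC : (p.1 + 1, p.2 - 1) ∈ C := hC.dDL p.1 p.2 hl.1 hbC hlC
    have hla : T ⟨(p.1, p.2 - 1), hlC⟩ = a := val_a_of_left hab hpb hT hp hl
    have hbb : T ⟨(p.1 + 1, p.2), hbC⟩ = b := by
      have : aD (DD C a b T) (p.1 + 1, p.2) := by
        refine ⟨by omega, ?_⟩
        have hh : (p.1 + 1 - 1, p.2) = p := by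
          rw [show p.1 + 1 - 1 = p.1 from by omega]
        rw [hh]; exact hp
      exact val_b_of_above hab hpa hT hb this
    -- the diagonal cell is in D
    have hle1 : T ⟨(p.1, p.2 - 1), hlC⟩ ≤ T ⟨(p.1 + 1, p.2 - 1), hdC⟩ := hT.2.1 _ _ rfl (by simp)
    have hle2 : T ⟨(p.1 + 1, p.2 - 1), hdC⟩ ≤ T ⟨(p.1 + 1, p.2), hbC⟩ := hT.1 _ _ rfl (show p.2 - 1 ≤ p.2 by omega)
    have hdD : (p.1 + 1, p.2 - 1) ∈ DD C a b T := by
      rw [mem_DD hdC]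
      exact fin_between hab (hla ▸ hle1) (hbb ▸ hle2)
    have hdb : T ⟨(p.1 + 1, p.2 - 1), hdC⟩ = b := by
      refine val_b_of_above hab hpa hT hdD ⟨by omega, ?_⟩
      have : (p.1 + 1 - 1, p.2 - 1) = (p.1, p.2 - 1) := by simp
      rw [this]; exact hl.2
    refine not_b_right hab hpb hT hdC hdb ?_
    unfold rD
    have : (p.1 + 1, p.2 - 1 + 1) = (p.1 + 1, p.2) := by
      rw [show p.2 - 1 + 1 = p.2 from by have := hl.1; omega]
    rw [this]; exact hb

lemma val_out (hab : (b : ℕ) = (a : ℕ) + 1) {p : ℕ × ℕ} (hp : p ∈ C)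
    (hnd : p ∉ DD C a b T) : T ⟨p, hp⟩ < a ∨ b < T ⟨p, hp⟩ := by
  rw [mem_DD hp] at hnd
  push_neg at hnd
  exact fin_out hab hnd.1 hnd.2

end ForwardFacts

section PhiFacts

variable {NA : ℕ} {C : Finset (ℕ × ℕ)} {a b : Fin NA} {prm : Fin NA → Bool}
  {T : {p // p ∈ C} → Fin NA} {u v : {p // p ∈ C}}

lemma Phi_out (h : u.1 ∉ DD C a b T) : Phi C a b T u = T u := by
  unfold Phi; rw [if_neg h]

lemma Phi_in (h : u.1 ∈ DD C a b T) : Phi C a b T u = a ∨ Phi C a b T u = b := by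
  unfold Phi; rw [if_pos h]; split_ifs <;> simp

lemma Phi_a_of_bD (h : u.1 ∈ DD C a b T) (hb : bD (DD C a b T) u.1) :
    Phi C a b T u = a := by
  unfold Phi; rw [if_pos h, if_pos (Or.inl hb)]

lemma Phi_b_of_lD (h : u.1 ∈ DD C a b T) (hnb : ¬ bD (DD C a b T) u.1)
    (hl : lD (DD C a b T) u.1) : Phi C a b T u = b := by
  unfold Phi; rw [if_pos h, if_neg]
  rintro (hb | ⟨-, hnl, -⟩)
  · exact hnb hb
  · exact hnl hl

lemma Phi_bot (hab : (b : ℕ) = (a : ℕ) + 1) (h : u.1 ∈ DD C a b T)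
    (hnb : ¬ bD (DD C a b T) u.1) (hnl : ¬ lD (DD C a b T) u.1) :
    (Phi C a b T u = a ↔ TopE (DD C a b T) u.1 ∈ DV C b T) := by
  unfold Phi; rw [if_pos h]
  by_cases htop : TopE (DD C a b T) u.1 ∈ DV C b T
  · rw [if_pos (Or.inr ⟨hnb, hnl, htop⟩)]; simp [htop]
  · rw [if_neg]
    · simp only [htop, iff_false]
      exact fun hba => (a_ne_b hab) hba.symm
    · rintro (hb | ⟨-, -, ht⟩)
      · exact hnb hb
      · exact htop ht

lemma mem_of_Phi (h : Phi C a b T u = a ∨ Phi C a b T u = b) : u.1 ∈ DD C a b T := by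
  by_contra hnd
  rw [Phi_out hnd] at h
  exact hnd ((mem_DD u.2).2 h)

lemma Phi_le_out_in (hab : (b : ℕ) = (a : ℕ) + 1) (hu : u.1 ∉ DD C a b T)
    (hv : v.1 ∈ DD C a b T) (hle : T u ≤ T v) : Phi C a b T u ≤ Phi C a b T v := by
  rw [Phi_out hu]
  rcases val_out hab u.2 hu with h | h
  · exact le_trans (le_of_lt h) (a_le' hab (Phi_in hv))
  · exfalso
    have := le_b' hab ((mem_DD v.2).1 hv)
    exact absurd (lt_of_lt_of_le h (le_trans hle this)) (lt_irrefl _)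

lemma Phi_le_in_out (hab : (b : ℕ) = (a : ℕ) + 1) (hu : u.1 ∈ DD C a b T)
    (hv : v.1 ∉ DD C a b T) (hle : T u ≤ T v) : Phi C a b T u ≤ Phi C a b T v := by
  rw [Phi_out hv]
  rcases val_out hab v.2 hv with h | h
  · exfalso
    have := a_le' hab ((mem_DD u.2).1 hu)
    exact absurd (lt_of_lt_of_le h (le_trans this hle)) (lt_irrefl _)
  · exact le_trans (le_b' hab (Phi_in hu)) (le_of_lt h)

/-- Φ sends supertableaux for `prm` to supertableaux for `prm2`. -/
lemma Phi_tab (hC : SkewShape C) (hab : (b : ℕ) = (a : ℕ) + 1) (hpa : prm a = false)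
    (hpb : prm b = true) (hT : IsSuperTab C prm T) (prm2 : Fin NA → Bool)
    (h2a : prm2 a = true) (h2b : prm2 b = false)
    (h2o : ∀ r : Fin NA, r ≠ a → r ≠ b → prm2 r = prm r) :
    IsSuperTab C prm2 (Phi C a b T) := by
  have hgood := good_D hC hab hpa hpb hT
  refine ⟨?_, ?_, ?_, ?_⟩
  · -- rows weakly increase
    intro u v h1 h2
    by_cases hu : u.1 ∈ DD C a b T <;> by_cases hv : v.1 ∈ DD C a b T
    · rcases eq_or_lt_of_le h2 with he | hlt
      · have : u = v := Subtype.ext (Prod.ext h1 he)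
        rw [this]
      · have hl : lD (DD C a b T) v.1 := lD_of_row hab hC hT hu hv h1 hlt
        have hnb : ¬ bD (DD C a b T) v.1 := fun hb => hgood.noDL v.1 hv ⟨hb, hl⟩
        rw [Phi_b_of_lD hv hnb hl]
        exact le_b' hab (Phi_in hu)
    · exact Phi_le_in_out hab hu hv (hT.1 u v h1 h2)
    · exact Phi_le_out_in hab hu hv (hT.1 u v h1 h2)
    · rw [Phi_out hu, Phi_out hv]; exact hT.1 u v h1 h2
  · -- columns weakly increase
    intro u v h1 h2
    by_cases hu : u.1 ∈ DD C a b T <;> by_cases hv : v.1 ∈ DD C a b T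
    · rcases eq_or_lt_of_le h2 with he | hlt
      · have : u = v := Subtype.ext (Prod.ext he h1)
        rw [this]
      · rw [Phi_a_of_bD hu (bD_of_col hab hC hT hu hv h1 hlt)]
        exact a_le' hab (Phi_in hv)
    · exact Phi_le_in_out hab hu hv (hT.2.1 u v h1 h2)
    · exact Phi_le_out_in hab hu hv (hT.2.1 u v h1 h2)
    · rw [Phi_out hu, Phi_out hv]; exact hT.2.1 u v h1 h2
  · -- unprimed letters: no column repeats
    intro u v h1 h2 hpr heq
    by_cases hu : u.1 ∈ DD C a b T <;> by_cases hv : v.1 ∈ DD C a b T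
    · have hub : Phi C a b T u = b := by
        rcases Phi_in hu with h | h
        · rw [h, h2a] at hpr; exact absurd hpr (by simp)
        · exact h
      have hvb : Phi C a b T v = b := heq ▸ hub
      rcases Nat.lt_or_ge u.1.1 v.1.1 with hlt | hge
      · rw [Phi_a_of_bD hu (bD_of_col hab hC hT hu hv h1 hlt)] at hub
        exact a_ne_b hab hub
      · rcases Nat.lt_or_ge v.1.1 u.1.1 with hlt' | hge'
        · rw [Phi_a_of_bD hv (bD_of_col hab hC hT hv hu h1.symm hlt')] at hvb
          exact a_ne_b hab hvb
        · exact h2 (by omega)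
    · rcases Phi_in hu with h | h <;> rw [Phi_out hv] at heq <;>
        exact hv ((mem_DD v.2).2 (by rw [← heq, h]; simp))
    · rcases Phi_in hv with h | h <;> rw [Phi_out hu] at heq <;>
        exact hu ((mem_DD u.2).2 (by rw [heq, h]; simp))
    · rw [Phi_out hu, Phi_out hv] at heq
      rw [Phi_out hu] at hpr
      have hval := (mem_DD u.2).not.1 hu
      push_neg at hval
      rw [h2o (T u) hval.1 hval.2] at hpr
      exact hT.2.2.1 u v h1 h2 hpr heq
  · -- primed letters: no row repeats
    intro u v h1 h2 hpr heq
    by_cases hu : u.1 ∈ DD C a b T <;> by_cases hv : v.1 ∈ DD C a b T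
    · have hua : Phi C a b T u = a := by
        rcases Phi_in hu with h | h
        · exact h
        · rw [h, h2b] at hpr; exact absurd hpr (by simp)
      have hva : Phi C a b T v = a := heq ▸ hua
      rcases Nat.lt_or_ge u.1.2 v.1.2 with hlt | hge
      · have hl : lD (DD C a b T) v.1 := lD_of_row hab hC hT hu hv h1 hlt
        have hnb : ¬ bD (DD C a b T) v.1 := fun hb => hgood.noDL v.1 hv ⟨hb, hl⟩
        rw [Phi_b_of_lD hv hnb hl] at hva
        exact a_ne_b hab hva.symm
      · rcases Nat.lt_or_ge v.1.2 u.1.2 with hlt' | hge'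
        · have hl : lD (DD C a b T) u.1 := lD_of_row hab hC hT hv hu h1.symm hlt'
          have hnb : ¬ bD (DD C a b T) u.1 := fun hb => hgood.noDL u.1 hu ⟨hb, hl⟩
          rw [Phi_b_of_lD hu hnb hl] at hua
          exact a_ne_b hab hua.symm
        · exact h2 (by omega)
    · rcases Phi_in hu with h | h <;> rw [Phi_out hv] at heq <;>
        exact hv ((mem_DD v.2).2 (by rw [← heq, h]; simp))
    · rcases Phi_in hv with h | h <;> rw [Phi_out hu] at heq <;>
        exact hu ((mem_DD u.2).2 (by rw [heq, h]; simp))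
    · rw [Phi_out hu, Phi_out hv] at heq
      rw [Phi_out hu] at hpr
      have hval := (mem_DD u.2).not.1 hu
      push_neg at hval
      rw [h2o (T u) hval.1 hval.2] at hpr
      exact hT.2.2.2 u v h1 h2 hpr heq

end PhiFacts

section BackwardFacts

variable {NA : ℕ} {C : Finset (ℕ × ℕ)} {a b : Fin NA} {prm2 : Fin NA → Bool}
  {S : {p // p ∈ C} → Fin NA} {u v : {p // p ∈ C}}

/-- a cell with letter `a` (primed in `prm2`) has no left neighbour in `D`. -/
lemma not_a_left (hab : (b : ℕ) = (a : ℕ) + 1) (h2a : prm2 a = true)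
    (hS : IsSuperTab C prm2 S) {p : ℕ × ℕ} (hp : p ∈ C) (ha : S ⟨p, hp⟩ = a)
    (hl : lD (DD C a b S) p) : False := by
  have hlC : (p.1, p.2 - 1) ∈ C := DD_sub hl.2
  have hlv := (mem_DD hlC).1 hl.2
  have hle : S ⟨(p.1, p.2 - 1), hlC⟩ ≤ S ⟨p, hp⟩ :=
    hS.1 _ _ rfl (show p.2 - 1 ≤ p.2 by omega)
  have hla : S ⟨(p.1, p.2 - 1), hlC⟩ = a := by
    rcases hlv with h | h
    · exact h
    · rw [h, ha] at hle; exact absurd hle (by rw [Fin.le_def]; omega)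
  exact hS.2.2.2 ⟨(p.1, p.2 - 1), hlC⟩ ⟨p, hp⟩ rfl
    (show p.2 - 1 ≠ p.2 by have := hl.1; omega) (by rw [hla, h2a])
    (hla.trans ha.symm)

/-- a cell of `D` with a lower neighbour in `D` carries letter `a`. -/
lemma val_a_of_below (hab : (b : ℕ) = (a : ℕ) + 1) (h2b : prm2 b = false)
    (hS : IsSuperTab C prm2 S) {p : ℕ × ℕ} (hp : p ∈ DD C a b S)
    (hb : bD (DD C a b S) p) : S ⟨p, DD_sub hp⟩ = a := by
  have hqC : (p.1 + 1, p.2) ∈ C := DD_sub hb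
  have hqv := (mem_DD hqC).1 hb
  have hle : S ⟨p, DD_sub hp⟩ ≤ S ⟨(p.1 + 1, p.2), hqC⟩ :=
    hS.2.1 _ _ rfl (show p.1 ≤ p.1 + 1 by omega)
  rcases (mem_DD (DD_sub hp)).1 hp with h | h
  · exact h
  · exfalso
    have hqb : S ⟨(p.1 + 1, p.2), hqC⟩ = b := by
      rcases hqv with h' | h'
      · rw [h, h'] at hle; exact absurd hle (by rw [Fin.le_def]; omega)
      · exact h'
    exact hS.2.2.1 ⟨p, DD_sub hp⟩ ⟨(p.1 + 1, p.2), hqC⟩ rfl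
      (show p.1 ≠ p.1 + 1 by omega) (by rw [h, h2b]) (h.trans hqb.symm)

lemma good_D' (hC : SkewShape C) (hab : (b : ℕ) = (a : ℕ) + 1) (h2a : prm2 a = true)
    (h2b : prm2 b = false) (hS : IsSuperTab C prm2 S) : GoodD (DD C a b S) := by
  constructor
  · rintro p hp ⟨hup, hr⟩
    have htC : (p.1 - 1, p.2) ∈ C := DD_sub hup.2
    have hrC : (p.1, p.2 + 1) ∈ C := DD_sub hr
    have hdC : (p.1 - 1, p.2 + 1) ∈ C := hC.dUR p.1 p.2 hup.1 htC hrC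
    have hle1 : S ⟨(p.1 - 1, p.2), htC⟩ ≤ S ⟨(p.1 - 1, p.2 + 1), hdC⟩ :=
      hS.1 _ _ rfl (show p.2 ≤ p.2 + 1 by omega)
    have hle2 : S ⟨(p.1 - 1, p.2 + 1), hdC⟩ ≤ S ⟨(p.1, p.2 + 1), hrC⟩ :=
      hS.2.1 _ _ rfl (show p.1 - 1 ≤ p.1 by omega)
    have hdD : (p.1 - 1, p.2 + 1) ∈ DD C a b S := by
      rw [mem_DD hdC]
      refine fin_between hab
        (le_trans (a_le' hab ((mem_DD htC).1 hup.2)) hle1)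
        (le_trans hle2 (le_b' hab ((mem_DD hrC).1 hr)))
    have hda : S ⟨(p.1 - 1, p.2 + 1), hdC⟩ = a := by
      refine val_a_of_below hab h2b hS hdD ?_
      unfold bD
      have hh : (p.1 - 1 + 1, p.2 + 1) = (p.1, p.2 + 1) := by
        rw [show p.1 - 1 + 1 = p.1 from by have := hup.1; omega]
      rw [hh]; exact hr
    refine not_a_left hab h2a hS hdC hda ⟨by omega, ?_⟩
    have hh : ((p.1 - 1 : ℕ), p.2 + 1 - 1) = (p.1 - 1, p.2) := by
      rw [show p.2 + 1 - 1 = p.2 from by omega]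
    rw [hh]; exact hup.2
  · rintro p hp ⟨hb, hl⟩
    exact not_a_left hab h2a hS (DD_sub hp) (val_a_of_below hab h2b hS hp hb) hl

lemma Psi_out (h : u.1 ∉ DD C a b S) : Psi C a b S u = S u := by
  unfold Psi; rw [if_neg h]

lemma Psi_in (h : u.1 ∈ DD C a b S) : Psi C a b S u = a ∨ Psi C a b S u = b := by
  unfold Psi; rw [if_pos h]; split_ifs <;> simp

lemma Psi_b_of_aD (h : u.1 ∈ DD C a b S) (hup : aD (DD C a b S) u.1) :
    Psi C a b S u = b := by
  unfold Psi; rw [if_pos h, if_pos (Or.inl hup)]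

lemma Psi_a_of_rD (h : u.1 ∈ DD C a b S) (hnup : ¬ aD (DD C a b S) u.1)
    (hr : rD (DD C a b S) u.1) : Psi C a b S u = a := by
  unfold Psi; rw [if_pos h, if_neg]
  rintro (hup | ⟨-, hnr, -⟩)
  · exact hnup hup
  · exact hnr hr

lemma Psi_top (hab : (b : ℕ) = (a : ℕ) + 1) (h : u.1 ∈ DD C a b S)
    (hnup : ¬ aD (DD C a b S) u.1) (hnr : ¬ rD (DD C a b S) u.1) :
    (Psi C a b S u = b ↔ BotE (DD C a b S) u.1 ∈ DV C a S) := by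
  unfold Psi; rw [if_pos h]
  by_cases hbot : BotE (DD C a b S) u.1 ∈ DV C a S
  · rw [if_pos (Or.inr ⟨hnup, hnr, hbot⟩)]; simp [hbot]
  · rw [if_neg]
    · simp only [hbot, iff_false]
      exact fun hba => (a_ne_b hab) hba
    · rintro (hup | ⟨-, -, ht⟩)
      · exact hnup hup
      · exact hbot ht

lemma mem_of_Psi (h : Psi C a b S u = a ∨ Psi C a b S u = b) : u.1 ∈ DD C a b S := by
  by_contra hnd
  rw [Psi_out hnd] at h
  exact hnd ((mem_DD u.2).2 h)

lemma Psi_le_out_in (hab : (b : ℕ) = (a : ℕ) + 1) (hu : u.1 ∉ DD C a b S)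
    (hv : v.1 ∈ DD C a b S) (hle : S u ≤ S v) : Psi C a b S u ≤ Psi C a b S v := by
  rw [Psi_out hu]
  rcases val_out hab u.2 hu with h | h
  · exact le_trans (le_of_lt h) (a_le' hab (Psi_in hv))
  · exfalso
    have := le_b' hab ((mem_DD v.2).1 hv)
    exact absurd (lt_of_lt_of_le h (le_trans hle this)) (lt_irrefl _)

lemma Psi_le_in_out (hab : (b : ℕ) = (a : ℕ) + 1) (hu : u.1 ∈ DD C a b S)
    (hv : v.1 ∉ DD C a b S) (hle : S u ≤ S v) : Psi C a b S u ≤ Psi C a b S v := by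
  rw [Psi_out hv]
  rcases val_out hab v.2 hv with h | h
  · exfalso
    have := a_le' hab ((mem_DD u.2).1 hu)
    exact absurd (lt_of_lt_of_le h (le_trans this hle)) (lt_irrefl _)
  · exact le_trans (le_b' hab (Psi_in hu)) (le_of_lt h)

/-- Ψ sends supertableaux for `prm2` to supertableaux for `prm`. -/
lemma Psi_tab (hC : SkewShape C) (hab : (b : ℕ) = (a : ℕ) + 1) (h2a : prm2 a = true)
    (h2b : prm2 b = false) (hS : IsSuperTab C prm2 S) (prm : Fin NA → Bool)
    (hpa : prm a = false) (hpb : prm b = true)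
    (h2o : ∀ r : Fin NA, r ≠ a → r ≠ b → prm2 r = prm r) :
    IsSuperTab C prm (Psi C a b S) := by
  have hgood := good_D' hC hab h2a h2b hS
  refine ⟨?_, ?_, ?_, ?_⟩
  · intro u v h1 h2
    by_cases hu : u.1 ∈ DD C a b S <;> by_cases hv : v.1 ∈ DD C a b S
    · rcases eq_or_lt_of_le h2 with he | hlt
      · have : u = v := Subtype.ext (Prod.ext h1 he)
        rw [this]
      · have hr : rD (DD C a b S) u.1 := rD_of_row hab hC hS hu hv h1 hlt
        have hnup : ¬ aD (DD C a b S) u.1 := fun hup => hgood.noUR u.1 hu ⟨hup, hr⟩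
        rw [Psi_a_of_rD hu hnup hr]
        exact a_le' hab (Psi_in hv)
    · exact Psi_le_in_out hab hu hv (hS.1 u v h1 h2)
    · exact Psi_le_out_in hab hu hv (hS.1 u v h1 h2)
    · rw [Psi_out hu, Psi_out hv]; exact hS.1 u v h1 h2
  · intro u v h1 h2
    by_cases hu : u.1 ∈ DD C a b S <;> by_cases hv : v.1 ∈ DD C a b S
    · rcases eq_or_lt_of_le h2 with he | hlt
      · have : u = v := Subtype.ext (Prod.ext he h1)
        rw [this]
      · rw [Psi_b_of_aD hv (aD_of_col hab hC hS hu hv h1 hlt)]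
        exact le_b' hab (Psi_in hu)
    · exact Psi_le_in_out hab hu hv (hS.2.1 u v h1 h2)
    · exact Psi_le_out_in hab hu hv (hS.2.1 u v h1 h2)
    · rw [Psi_out hu, Psi_out hv]; exact hS.2.1 u v h1 h2
  · -- under `prm`, `a` is unprimed: no column repeats
    intro u v h1 h2 hpr heq
    by_cases hu : u.1 ∈ DD C a b S <;> by_cases hv : v.1 ∈ DD C a b S
    · have hua : Psi C a b S u = a := by
        rcases Psi_in hu with h | h
        · exact h
        · rw [h, hpb] at hpr; exact absurd hpr (by simp)
      have hva : Psi C a b S v = a := heq ▸ hua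
      rcases Nat.lt_or_ge u.1.1 v.1.1 with hlt | hge
      · rw [Psi_b_of_aD hv (aD_of_col hab hC hS hu hv h1 hlt)] at hva
        exact a_ne_b hab hva.symm
      · rcases Nat.lt_or_ge v.1.1 u.1.1 with hlt' | hge'
        · rw [Psi_b_of_aD hu (aD_of_col hab hC hS hv hu h1.symm hlt')] at hua
          exact a_ne_b hab hua.symm
        · exact h2 (by omega)
    · rcases Psi_in hu with h | h <;> rw [Psi_out hv] at heq <;>
        exact hv ((mem_DD v.2).2 (by rw [← heq, h]; simp))
    · rcases Psi_in hv with h | h <;> rw [Psi_out hu] at heq <;>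
        exact hu ((mem_DD u.2).2 (by rw [heq, h]; simp))
    · rw [Psi_out hu, Psi_out hv] at heq
      rw [Psi_out hu] at hpr
      have hval := (mem_DD u.2).not.1 hu
      push_neg at hval
      rw [← h2o (S u) hval.1 hval.2] at hpr
      exact hS.2.2.1 u v h1 h2 hpr heq
  · -- under `prm`, `b` is primed: no row repeats
    intro u v h1 h2 hpr heq
    by_cases hu : u.1 ∈ DD C a b S <;> by_cases hv : v.1 ∈ DD C a b S
    · have hub : Psi C a b S u = b := by
        rcases Psi_in hu with h | h
        · rw [h, hpa] at hpr; exact absurd hpr (by simp)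
        · exact h
      have hvb : Psi C a b S v = b := heq ▸ hub
      rcases Nat.lt_or_ge u.1.2 v.1.2 with hlt | hge
      · have hr : rD (DD C a b S) u.1 := rD_of_row hab hC hS hu hv h1 hlt
        have hnup : ¬ aD (DD C a b S) u.1 := fun hup => hgood.noUR u.1 hu ⟨hup, hr⟩
        rw [Psi_a_of_rD hu hnup hr] at hub
        exact a_ne_b hab hub
      · rcases Nat.lt_or_ge v.1.2 u.1.2 with hlt' | hge'
        · have hr : rD (DD C a b S) v.1 := rD_of_row hab hC hS hv hu h1.symm hlt'
          have hnup : ¬ aD (DD C a b S) v.1 := fun hup => hgood.noUR v.1 hv ⟨hup, hr⟩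
          rw [Psi_a_of_rD hv hnup hr] at hvb
          exact a_ne_b hab hvb
        · exact h2 (by omega)
    · rcases Psi_in hu with h | h <;> rw [Psi_out hv] at heq <;>
        exact hv ((mem_DD v.2).2 (by rw [← heq, h]; simp))
    · rcases Psi_in hv with h | h <;> rw [Psi_out hu] at heq <;>
        exact hu ((mem_DD u.2).2 (by rw [heq, h]; simp))
    · rw [Psi_out hu, Psi_out hv] at heq
      rw [Psi_out hu] at hpr
      have hval := (mem_DD u.2).not.1 hu
      push_neg at hval
      rw [← h2o (S u) hval.1 hval.2] at hpr
      exact hS.2.2.2 u v h1 h2 hpr heq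

end BackwardFacts

section Compositions

variable {NA : ℕ} {C : Finset (ℕ × ℕ)} {a b : Fin NA} {prm prm2 : Fin NA → Bool}
  {T S : {p // p ∈ C} → Fin NA}

lemma DD_Phi : DD C a b (Phi C a b T) = DD C a b T := by
  ext p
  by_cases hp : p ∈ C
  · rw [mem_DD hp, mem_DD hp]
    exact ⟨fun h => (mem_DD hp).1 (mem_of_Phi (u := ⟨p, hp⟩) h),
      fun h => Phi_in ((mem_DD hp).2 h)⟩
  · exact iff_of_false (fun h => hp (DD_sub h)) (fun h => hp (DD_sub h))

lemma DD_Psi : DD C a b (Psi C a b S) = DD C a b S := by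
  ext p
  by_cases hp : p ∈ C
  · rw [mem_DD hp, mem_DD hp]
    exact ⟨fun h => (mem_DD hp).1 (mem_of_Psi (u := ⟨p, hp⟩) h),
      fun h => Psi_in ((mem_DD hp).2 h)⟩
  · exact iff_of_false (fun h => hp (DD_sub h)) (fun h => hp (DD_sub h))

lemma PsiPhi (hC : SkewShape C) (hab : (b : ℕ) = (a : ℕ) + 1) (hpa : prm a = false)
    (hpb : prm b = true) (hT : IsSuperTab C prm T) :
    Psi C a b (Phi C a b T) = T := by
  have hgood := good_D hC hab hpa hpb hT
  funext u
  by_cases hu : u.1 ∈ DD C a b T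
  · unfold Psi
    rw [DD_Phi, if_pos hu]
    by_cases hup : aD (DD C a b T) u.1
    · rw [if_pos (Or.inl hup)]
      exact (val_b_of_above hab hpa hT hu hup).symm
    · by_cases hr : rD (DD C a b T) u.1
      · rw [if_neg (by rintro (h | ⟨-, hnr, -⟩); exacts [hup h, hnr hr])]
        rcases (mem_DD (DD_sub hu)).1 hu with h | h
        · exact h.symm
        · exact (not_b_right hab hpb hT (DD_sub hu) h hr).elim
      · have htope : TopE (DD C a b T) u.1 = u.1 :=
          TopE_of_none (nxt_none_iff.2 ⟨hup, hr⟩)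
        have hqD : BotE (DD C a b T) u.1 ∈ DD C a b T := BotE_mem hu
        have hqprv : prv (DD C a b T) (BotE (DD C a b T) u.1) = none := prv_BotE u.1
        have hqnb := (prv_none_iff.1 hqprv).1
        have hqnl := (prv_none_iff.1 hqprv).2
        have hTq : TopE (DD C a b T) (BotE (DD C a b T) u.1) = u.1 := by
          rw [TopE_BotE hgood hu, htope]
        have hkey : BotE (DD C a b T) u.1 ∈ DV C a (Phi C a b T) ↔ T u = b := by
          rw [mem_DV (DD_sub hqD),
            Phi_bot (u := ⟨BotE (DD C a b T) u.1, DD_sub hqD⟩) hab hqD hqnb hqnl,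
            hTq, mem_DV (DD_sub hu)]
        rcases (mem_DD (DD_sub hu)).1 hu with h | h
        · rw [if_neg]
          · exact h.symm
          · rintro (hup' | ⟨-, -, hq⟩)
            · exact hup hup'
            · exact a_ne_b hab (h.symm.trans (hkey.1 hq))
        · rw [if_pos (Or.inr ⟨hup, hr, hkey.2 h⟩)]
          exact h.symm
  · have hu' : u.1 ∉ DD C a b (Phi C a b T) := by rw [DD_Phi]; exact hu
    rw [Psi_out hu', Phi_out hu]

lemma PhiPsi (hC : SkewShape C) (hab : (b : ℕ) = (a : ℕ) + 1) (h2a : prm2 a = true)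
    (h2b : prm2 b = false) (hS : IsSuperTab C prm2 S) :
    Phi C a b (Psi C a b S) = S := by
  have hgood := good_D' hC hab h2a h2b hS
  funext u
  by_cases hu : u.1 ∈ DD C a b S
  · unfold Phi
    rw [DD_Psi, if_pos hu]
    by_cases hb : bD (DD C a b S) u.1
    · rw [if_pos (Or.inl hb)]
      exact (val_a_of_below hab h2b hS hu hb).symm
    · by_cases hl : lD (DD C a b S) u.1
      · rw [if_neg (by rintro (h | ⟨-, hnl, -⟩); exacts [hb h, hnl hl])]
        rcases (mem_DD (DD_sub hu)).1 hu with h | h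
        · exact (not_a_left hab h2a hS (DD_sub hu) h hl).elim
        · exact h.symm
      · have hbote : BotE (DD C a b S) u.1 = u.1 :=
          BotE_of_none (prv_none_iff.2 ⟨hb, hl⟩)
        have hqD : TopE (DD C a b S) u.1 ∈ DD C a b S := TopE_mem hu
        have hqnxt : nxt (DD C a b S) (TopE (DD C a b S) u.1) = none := nxt_TopE u.1
        have hqna := (nxt_none_iff.1 hqnxt).1
        have hqnr := (nxt_none_iff.1 hqnxt).2
        have hBq : BotE (DD C a b S) (TopE (DD C a b S) u.1) = u.1 := by
          rw [BotE_TopE hgood hu, hbote]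
        have hkey : TopE (DD C a b S) u.1 ∈ DV C b (Psi C a b S) ↔ S u = a := by
          rw [mem_DV (DD_sub hqD),
            Psi_top (u := ⟨TopE (DD C a b S) u.1, DD_sub hqD⟩) hab hqD hqna hqnr,
            hBq, mem_DV (DD_sub hu)]
        rcases (mem_DD (DD_sub hu)).1 hu with h | h
        · rw [if_pos (Or.inr ⟨hb, hl, hkey.2 h⟩)]
          exact h.symm
        · rw [if_neg]
          · exact h.symm
          · rintro (hb' | ⟨-, -, hq⟩)
            · exact hb hb'
            · exact a_ne_b hab ((hkey.1 hq).symm.trans h)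
  · have hu' : u.1 ∉ DD C a b (Psi C a b S) := by rw [DD_Psi]; exact hu
    rw [Phi_out hu', Psi_out hu]

end Compositions

section Counting

variable {NA : ℕ} {C : Finset (ℕ × ℕ)} {a b : Fin NA} {prm : Fin NA → Bool}
  {T : {p // p ∈ C} → Fin NA} {u : {p // p ∈ C}}

lemma Phi_a_info (hab : (b : ℕ) = (a : ℕ) + 1) (hv : u.1 ∈ DD C a b T)
    (hnb : ¬ bD (DD C a b T) u.1) (hP : Phi C a b T u = a) :
    ¬ lD (DD C a b T) u.1 ∧ TopE (DD C a b T) u.1 ∈ DV C b T := by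
  by_cases hl : lD (DD C a b T) u.1
  · rw [Phi_b_of_lD hv hnb hl] at hP
    exact absurd hP (fun h => a_ne_b hab h.symm)
  · exact ⟨hl, (Phi_bot hab hv hnb hl).1 hP⟩

noncomputable def mapI (C : Finset (ℕ × ℕ)) (a b : Fin NA) (T : {p // p ∈ C} → Fin NA) :
    {p // p ∈ C} → {p // p ∈ C} := fun u =>
  if h : aD (DD C a b T) u.1 then ⟨(u.1.1 - 1, u.1.2), DD_sub h.2⟩
  else if h2 : u.1 ∈ DD C a b T then ⟨BotE (DD C a b T) u.1, DD_sub (BotE_mem h2)⟩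
  else u

noncomputable def mapJ (C : Finset (ℕ × ℕ)) (a b : Fin NA) (T : {p // p ∈ C} → Fin NA) :
    {p // p ∈ C} → {p // p ∈ C} := fun u =>
  if h : bD (DD C a b T) u.1 then ⟨(u.1.1 + 1, u.1.2), DD_sub h⟩
  else if h2 : u.1 ∈ DD C a b T then ⟨TopE (DD C a b T) u.1, DD_sub (TopE_mem h2)⟩
  else u

open Finset in
lemma count_ab (hC : SkewShape C) (hab : (b : ℕ) = (a : ℕ) + 1) (hpa : prm a = false)
    (hpb : prm b = true) (hT : IsSuperTab C prm T) :
    (univ.filter fun u : {p // p ∈ C} => T u = b).card =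
      (univ.filter fun u : {p // p ∈ C} => Phi C a b T u = a).card := by
  have hgood := good_D hC hab hpa hpb hT
  refine Finset.card_nbij' (mapI C a b T) (mapJ C a b T) ?_ ?_ ?_ ?_
  · -- mapI lands in the target
    intro u hu
    rw [Finset.mem_coe, mem_filter] at hu ⊢
    refine ⟨mem_univ _, ?_⟩
    have hub : T u = b := hu.2
    have huD : u.1 ∈ DD C a b T := (mem_DD u.2).2 (Or.inr hub)
    unfold mapI
    by_cases h : aD (DD C a b T) u.1
    · rw [dif_pos h]
      refine Phi_a_of_bD (u := ⟨(u.1.1 - 1, u.1.2), DD_sub h.2⟩) h.2 ?_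
      unfold bD
      have hh : (u.1.1 - 1 + 1, u.1.2) = u.1 := by
        rw [show u.1.1 - 1 + 1 = u.1.1 from by have := h.1; omega]
      rw [hh]; exact huD
    · rw [dif_neg h, dif_pos huD]
      have hnr : ¬ rD (DD C a b T) u.1 := fun hr => not_b_right hab hpb hT u.2 hub hr
      have hqD := BotE_mem (D := DD C a b T) huD
      have hqprv := prv_BotE (D := DD C a b T) u.1
      rw [Phi_bot (u := ⟨BotE (DD C a b T) u.1, DD_sub hqD⟩) hab hqD
        (prv_none_iff.1 hqprv).1 (prv_none_iff.1 hqprv).2]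
      rw [TopE_BotE hgood huD, TopE_of_none (nxt_none_iff.2 ⟨h, hnr⟩)]
      exact (mem_DV u.2).2 hub
  · -- mapJ lands in the source
    intro v hv
    rw [Finset.mem_coe, mem_filter] at hv ⊢
    refine ⟨mem_univ _, ?_⟩
    have hva : Phi C a b T v = a := hv.2
    have hvD : v.1 ∈ DD C a b T := mem_of_Phi (Or.inl hva)
    unfold mapJ
    by_cases h : bD (DD C a b T) v.1
    · rw [dif_pos h]
      exact val_b_of_above hab hpa hT h ⟨Nat.succ_pos _, hvD⟩
    · rw [dif_neg h, dif_pos hvD]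
      have hinfo := Phi_a_info hab hvD h hva
      exact (mem_DV (DD_sub (TopE_mem hvD))).1 hinfo.2
  · -- left inverse
    intro u hu
    rw [Finset.mem_coe, mem_filter] at hu
    have hub : T u = b := hu.2
    have huD : u.1 ∈ DD C a b T := (mem_DD u.2).2 (Or.inr hub)
    unfold mapI mapJ
    by_cases h : aD (DD C a b T) u.1
    · rw [dif_pos h]
      have hbd : bD (DD C a b T) ((⟨(u.1.1 - 1, u.1.2), DD_sub h.2⟩ :
          {p // p ∈ C}).1) := by
        unfold bD
        have hh : (u.1.1 - 1 + 1, u.1.2) = u.1 := by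
          rw [show u.1.1 - 1 + 1 = u.1.1 from by have := h.1; omega]
        rw [hh]; exact huD
      rw [dif_pos hbd]
      apply Subtype.ext
      show (u.1.1 - 1 + 1, u.1.2) = u.1
      rw [show u.1.1 - 1 + 1 = u.1.1 from by have := h.1; omega]
    · rw [dif_neg h, dif_pos huD]
      have hqprv := prv_BotE (D := DD C a b T) u.1
      have hnbd : ¬ bD (DD C a b T) (BotE (DD C a b T) u.1) := (prv_none_iff.1 hqprv).1
      rw [dif_neg hnbd, dif_pos (BotE_mem huD)]
      apply Subtype.ext
      have hnr : ¬ rD (DD C a b T) u.1 := fun hr => not_b_right hab hpb hT u.2 hub hr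
      show TopE (DD C a b T) (BotE (DD C a b T) u.1) = u.1
      rw [TopE_BotE hgood huD, TopE_of_none (nxt_none_iff.2 ⟨h, hnr⟩)]
  · -- right inverse
    intro v hv
    rw [Finset.mem_coe, mem_filter] at hv
    have hva : Phi C a b T v = a := hv.2
    have hvD : v.1 ∈ DD C a b T := mem_of_Phi (Or.inl hva)
    unfold mapI mapJ
    by_cases h : bD (DD C a b T) v.1
    · rw [dif_pos h]
      have had : aD (DD C a b T) ((⟨(v.1.1 + 1, v.1.2), DD_sub h⟩ : {p // p ∈ C}).1) :=
        ⟨Nat.succ_pos _, hvD⟩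
      rw [dif_pos had]
      apply Subtype.ext
      show (v.1.1 + 1 - 1, v.1.2) = v.1
      rw [show v.1.1 + 1 - 1 = v.1.1 from by omega]
    · rw [dif_neg h, dif_pos hvD]
      have hqnxt := nxt_TopE (D := DD C a b T) v.1
      have hnad : ¬ aD (DD C a b T) (TopE (DD C a b T) v.1) := (nxt_none_iff.1 hqnxt).1
      rw [dif_neg hnad, dif_pos (TopE_mem hvD)]
      apply Subtype.ext
      have hinfo := Phi_a_info hab hvD h hva
      show BotE (DD C a b T) (TopE (DD C a b T) v.1) = v.1
      rw [BotE_TopE hgood hvD, BotE_of_none (prv_none_iff.2 ⟨h, hinfo.1⟩)]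

end Counting

section ProdSwap

variable {NA : ℕ} {C : Finset (ℕ × ℕ)} {a b : Fin NA} {prm prm2 : Fin NA → Bool}
  {T : {p // p ∈ C} → Fin NA}

open Finset in
lemma prod_Phi (hC : SkewShape C) (hab : (b : ℕ) = (a : ℕ) + 1) (hpa : prm a = false)
    (hpb : prm b = true) (hT : IsSuperTab C prm T) (w : Fin NA → A) :
    ∏ u : {p // p ∈ C}, w (Equiv.swap a b (Phi C a b T u)) =
      ∏ u : {p // p ∈ C}, w (T u) := by
  rw [← Finset.prod_filter_mul_prod_filter_not Finset.univ
      (fun u : {p // p ∈ C} => u.1 ∈ DD C a b T)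
      (fun u => w (Equiv.swap a b (Phi C a b T u))),
    ← Finset.prod_filter_mul_prod_filter_not Finset.univ
      (fun u : {p // p ∈ C} => u.1 ∈ DD C a b T)
      (fun u => w (T u))]
  congr 1
  · have h1 : ∏ u ∈ univ.filter (fun u : {p // p ∈ C} => u.1 ∈ DD C a b T),
        w (Equiv.swap a b (Phi C a b T u)) =
        ∏ u ∈ univ.filter (fun u : {p // p ∈ C} => u.1 ∈ DD C a b T),
        (if Phi C a b T u = a then w b else w a) := by
      refine prod_congr rfl fun u hu => ?_
      rw [mem_filter] at hu
      rcases Phi_in hu.2 with h | h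
      · rw [h, if_pos rfl, Equiv.swap_apply_left]
      · rw [h, if_neg (fun hh => a_ne_b hab hh.symm), Equiv.swap_apply_right]
    have h2 : ∏ u ∈ univ.filter (fun u : {p // p ∈ C} => u.1 ∈ DD C a b T), w (T u) =
        ∏ u ∈ univ.filter (fun u : {p // p ∈ C} => u.1 ∈ DD C a b T),
        (if T u = a then w a else w b) := by
      refine prod_congr rfl fun u hu => ?_
      rw [mem_filter] at hu
      rcases (mem_DD u.2).1 hu.2 with h | h
      · rw [h, if_pos rfl]
      · rw [h, if_neg (fun hh => a_ne_b hab hh.symm)]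
    rw [h1, h2, Finset.prod_ite, Finset.prod_ite, prod_const, prod_const, prod_const,
      prod_const]
    have e1 : (univ.filter (fun u : {p // p ∈ C} => u.1 ∈ DD C a b T)).filter
        (fun u => Phi C a b T u = a) = univ.filter (fun u => Phi C a b T u = a) := by
      ext u
      simp only [mem_filter, mem_univ, true_and, and_iff_right_iff_imp]
      exact fun h => mem_of_Phi (Or.inl h)
    have e2 : (univ.filter (fun u : {p // p ∈ C} => u.1 ∈ DD C a b T)).filter
        (fun u => ¬ Phi C a b T u = a) = univ.filter (fun u => Phi C a b T u = b) := by
      ext u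
      simp only [mem_filter, mem_univ, true_and]
      constructor
      · rintro ⟨h1', h2'⟩
        rcases Phi_in h1' with h | h
        · exact absurd h h2'
        · exact h
      · intro h
        exact ⟨mem_of_Phi (Or.inr h), fun hh => a_ne_b hab (hh.symm.trans h)⟩
    have e3 : (univ.filter (fun u : {p // p ∈ C} => u.1 ∈ DD C a b T)).filter
        (fun u => T u = a) = univ.filter (fun u => T u = a) := by
      ext u
      simp only [mem_filter, mem_univ, true_and, and_iff_right_iff_imp]
      exact fun h => (mem_DD u.2).2 (Or.inl h)
    have e4 : (univ.filter (fun u : {p // p ∈ C} => u.1 ∈ DD C a b T)).filter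
        (fun u => ¬ T u = a) = univ.filter (fun u => T u = b) := by
      ext u
      simp only [mem_filter, mem_univ, true_and]
      constructor
      · rintro ⟨h1', h2'⟩
        rcases (mem_DD u.2).1 h1' with h | h
        · exact absurd h h2'
        · exact h
      · intro h
        exact ⟨(mem_DD u.2).2 (Or.inr h), fun hh => a_ne_b hab (hh.symm.trans h)⟩
    rw [e1, e2, e3, e4]
    have hcnt := count_ab hC hab hpa hpb hT
    have hpart1 := Finset.card_filter_add_card_filter_not
      (s := univ.filter (fun u : {p // p ∈ C} => u.1 ∈ DD C a b T))
      (p := fun u => Phi C a b T u = a)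
    have hpart2 := Finset.card_filter_add_card_filter_not
      (s := univ.filter (fun u : {p // p ∈ C} => u.1 ∈ DD C a b T))
      (p := fun u => T u = a)
    rw [e1, e2] at hpart1
    rw [e3, e4] at hpart2
    have hcnt2 : (univ.filter fun u : {p // p ∈ C} => Phi C a b T u = b).card =
        (univ.filter fun u : {p // p ∈ C} => T u = a).card := by omega
    rw [hcnt2, ← hcnt, mul_comm]
  · refine prod_congr rfl fun u hu => ?_
    rw [mem_filter] at hu
    rw [Phi_out hu.2]
    have hval := (mem_DD u.2).not.1 hu.2
    push_neg at hval
    rw [Equiv.swap_apply_of_ne_of_ne hval.1 hval.2]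

open Finset in
lemma tabSum_swap (hC : SkewShape C) (hab : (b : ℕ) = (a : ℕ) + 1) (hpa : prm a = false)
    (hpb : prm b = true) (h2a : prm2 a = true) (h2b : prm2 b = false)
    (h2o : ∀ r : Fin NA, r ≠ a → r ≠ b → prm2 r = prm r) (w : Fin NA → A) :
    tabSum C prm (fun r _ => w r) = tabSum C prm2 (fun r _ => w (Equiv.swap a b r)) := by
  unfold tabSum
  refine Finset.sum_nbij' (Phi C a b) (Psi C a b) ?_ ?_ ?_ ?_ ?_
  · intro T0 hT0
    rw [mem_filter] at hT0 ⊢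
    exact ⟨mem_univ _, Phi_tab hC hab hpa hpb hT0.2 prm2 h2a h2b h2o⟩
  · intro S0 hS0
    rw [mem_filter] at hS0 ⊢
    exact ⟨mem_univ _, Psi_tab hC hab h2a h2b hS0.2 prm hpa hpb h2o⟩
  · intro T0 hT0
    rw [mem_filter] at hT0
    exact PsiPhi hC hab hpa hpb hT0.2
  · intro S0 hS0
    rw [mem_filter] at hS0
    exact PhiPsi hC hab h2a h2b hS0.2
  · intro T0 hT0
    rw [mem_filter] at hT0
    exact (prod_Phi hC hab hpa hpb hT0.2 w).symm

end ProdSwap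

section Letters

variable {NA : ℕ}

lemma swap_val {a b s : Fin NA} :
    ((Equiv.swap a b s : Fin NA) : ℕ) =
      if s = a then (b : ℕ) else if s = b then (a : ℕ) else (s : ℕ) := by
  rw [Equiv.swap_apply_def]
  split_ifs <;> rfl

lemma idx_swap {prm : Fin NA → Bool} {a b : Fin NA} (hab : (b : ℕ) = (a : ℕ) + 1)
    (hne : prm a ≠ prm b) (r : Fin NA) :
    idx (fun s => prm (Equiv.swap a b s)) r = idx prm (Equiv.swap a b r) := by
  have K1 : ∀ s : Fin NA, prm (Equiv.swap a b s) = prm (Equiv.swap a b r) → s ≤ r →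
      Equiv.swap a b s ≤ Equiv.swap a b r := by
    intro s hp hle
    by_cases hsa : s = a
    · rw [hsa, Equiv.swap_apply_left]
      by_cases hra : r = a
      · rw [hra, Equiv.swap_apply_left]
      · by_cases hrb : r = b
        · rw [hsa, hrb, Equiv.swap_apply_left, Equiv.swap_apply_right] at hp
          exact absurd hp.symm hne
        · rw [Equiv.swap_apply_of_ne_of_ne hra hrb]
          have h1 := Fin.val_ne_iff.mpr hra
          rw [hsa] at hle
          rw [Fin.le_def] at hle ⊢
          omega
    · by_cases hsb : s = b
      · rw [hsb, Equiv.swap_apply_right]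
        rw [hsb] at hle
        by_cases hra : r = a
        · exfalso
          rw [hra] at hle
          rw [Fin.le_def] at hle
          omega
        · by_cases hrb : r = b
          · rw [hrb, Equiv.swap_apply_right]
          · rw [Equiv.swap_apply_of_ne_of_ne hra hrb]
            have h1 := Fin.val_ne_iff.mpr hra
            rw [Fin.le_def] at hle ⊢
            omega
      · rw [Equiv.swap_apply_of_ne_of_ne hsa hsb]
        have h1 := Fin.val_ne_iff.mpr hsa
        have h2 := Fin.val_ne_iff.mpr hsb
        by_cases hra : r = a
        · rw [hra, Equiv.swap_apply_left]
          rw [hra] at hle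
          rw [Fin.le_def] at hle ⊢
          omega
        · by_cases hrb : r = b
          · rw [hrb, Equiv.swap_apply_right]
            rw [hrb] at hle
            rw [Fin.le_def] at hle ⊢
            omega
          · rwa [Equiv.swap_apply_of_ne_of_ne hra hrb]
  have K2 : ∀ t : Fin NA, prm t = prm (Equiv.swap a b r) → t ≤ Equiv.swap a b r →
      Equiv.swap a b t ≤ r := by
    intro t hp hle
    by_cases hta : t = a
    · rw [hta, Equiv.swap_apply_left]
      by_cases hra : r = a
      · exfalso
        rw [hta, hra, Equiv.swap_apply_left] at hp
        exact hne hp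
      · by_cases hrb : r = b
        · rw [hrb]
        · rw [Equiv.swap_apply_of_ne_of_ne hra hrb] at hle
          rw [hta] at hle
          have h1 := Fin.val_ne_iff.mpr hra
          rw [Fin.le_def] at hle ⊢
          omega
    · by_cases htb : t = b
      · rw [htb, Equiv.swap_apply_right]
        rw [htb] at hle
        by_cases hra : r = a
        · rw [hra]
        · by_cases hrb : r = b
          · rw [hrb]
            rw [Fin.le_def]; omega
          · rw [Equiv.swap_apply_of_ne_of_ne hra hrb] at hle
            rw [Fin.le_def] at hle ⊢
            omega
      · rw [Equiv.swap_apply_of_ne_of_ne hta htb]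
        have h1 := Fin.val_ne_iff.mpr hta
        have h2 := Fin.val_ne_iff.mpr htb
        by_cases hra : r = a
        · rw [hra, Equiv.swap_apply_left] at hle
          rw [hra]
          rw [Fin.le_def] at hle ⊢
          omega
        · by_cases hrb : r = b
          · rw [hrb, Equiv.swap_apply_right] at hle
            rw [hrb]
            rw [Fin.le_def] at hle ⊢
            omega
          · rwa [Equiv.swap_apply_of_ne_of_ne hra hrb] at hle
  unfold idx
  refine Finset.card_nbij' (fun s => Equiv.swap a b s) (fun s => Equiv.swap a b s)
    ?_ ?_ ?_ ?_
  · intro s hs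
    rw [Finset.mem_coe, Finset.mem_filter] at hs ⊢
    exact ⟨Finset.mem_univ _, hs.2.1, K1 s hs.2.1 hs.2.2⟩
  · intro t ht
    rw [Finset.mem_coe, Finset.mem_filter] at ht ⊢
    refine ⟨Finset.mem_univ _, ?_, K2 t ht.2.1 ht.2.2⟩
    show prm (Equiv.swap a b (Equiv.swap a b t)) = prm (Equiv.swap a b r)
    rw [Equiv.swap_apply_self]
    exact ht.2.1
  · intro s _
    show Equiv.swap a b (Equiv.swap a b s) = s
    rw [Equiv.swap_apply_self]
  · intro t _
    show Equiv.swap a b (Equiv.swap a b t) = t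
    rw [Equiv.swap_apply_self]

/-- the common value of `wFact` at `a = 0` and the first-variation weights. -/
noncomputable def wgt0 (m n : ℕ) (prm : Fin NA → Bool) (x : Fin m → A) (y : Fin n → A) :
    Fin NA → A := fun r =>
  if prm r then (if h : idx prm r - 1 < n then y ⟨idx prm r - 1, h⟩ else 0)
  else (if h : idx prm r - 1 < m then x ⟨idx prm r - 1, h⟩ else 0)

lemma wFact_zero {m n : ℕ} (prm : Fin NA → Bool) (x : Fin m → A) (y : Fin n → A) :
    wFact prm x y (fun _ => (0 : A)) = fun r _ => wgt0 m n prm x y r := by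
  funext r c
  unfold wFact wgt0
  by_cases h : prm r <;> simp [h]

lemma wgt0_swap {m n : ℕ} {prm : Fin NA → Bool} {a b : Fin NA}
    (hab : (b : ℕ) = (a : ℕ) + 1) (hne : prm a ≠ prm b) (x : Fin m → A) (y : Fin n → A)
    (r : Fin NA) :
    wgt0 m n (fun s => prm (Equiv.swap a b s)) x y r =
      wgt0 m n prm x y (Equiv.swap a b r) := by
  unfold wgt0
  rw [idx_swap hab hne r]

/-- the set of inversions (primed letter before unprimed letter). -/
noncomputable def invs (prm : Fin NA → Bool) : Finset (Fin NA × Fin NA) :=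
  Finset.univ.filter fun rs => rs.1 < rs.2 ∧ prm rs.1 = true ∧ prm rs.2 = false

lemma invs_swap_lt {prm : Fin NA → Bool} {a b : Fin NA} (hab : (b : ℕ) = (a : ℕ) + 1)
    (hpa : prm a = true) (hpb : prm b = false) :
    (invs fun s => prm (Equiv.swap a b s)).card < (invs prm).card := by
  have hinj : Function.Injective (Prod.map (Equiv.swap a b) (Equiv.swap a b) :
      Fin NA × Fin NA → Fin NA × Fin NA) :=
    Function.Injective.prodMap (Equiv.injective _) (Equiv.injective _)
  rw [← Finset.card_image_of_injective (invs fun s => prm (Equiv.swap a b s)) hinj]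
  apply Finset.card_lt_card
  rw [Finset.ssubset_iff_of_subset]
  · refine ⟨(a, b), ?_, ?_⟩
    · simp only [invs, Finset.mem_filter, Finset.mem_univ, true_and]
      exact ⟨a_lt_b hab, hpa, hpb⟩
    · intro hmem
      rw [Finset.mem_image] at hmem
      obtain ⟨⟨r, s⟩, hrs, heq⟩ := hmem
      simp only [Prod.map, Prod.mk.injEq] at heq
      have hr : r = b := by
        have h' := congrArg (Equiv.swap a b) heq.1
        rwa [Equiv.swap_apply_self, Equiv.swap_apply_left] at h'
      have hs : s = a := by
        have h' := congrArg (Equiv.swap a b) heq.2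
        rwa [Equiv.swap_apply_self, Equiv.swap_apply_right] at h' 
      simp only [invs, Finset.mem_filter, Finset.mem_univ, true_and, hr, hs] at hrs
      exact absurd hrs.1 (by rw [Fin.lt_def]; omega)
  · intro rs hrs
    rw [Finset.mem_image] at hrs
    obtain ⟨⟨r, s⟩, hrs', rfl⟩ := hrs
    simp only [invs, Finset.mem_filter, Finset.mem_univ, true_and] at hrs' ⊢
    obtain ⟨hlt, hr, hs⟩ := hrs'
    have hrna : r ≠ a := by
      intro h; rw [h, Equiv.swap_apply_left, hpb] at hr; exact absurd hr (by simp)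
    have hsnb : s ≠ b := by
      intro h; rw [h, Equiv.swap_apply_right, hpa] at hs; exact absurd hs (by simp)
    refine ⟨?_, hr, hs⟩
    show Equiv.swap a b r < Equiv.swap a b s
    by_cases hrb : r = b
    · rw [hrb, Equiv.swap_apply_right]
      by_cases hsa : s = a
      · exfalso
        rw [hrb, hsa, Fin.lt_def] at hlt
        omega
      · rw [Equiv.swap_apply_of_ne_of_ne hsa hsnb]
        rw [hrb] at hlt
        rw [Fin.lt_def] at hlt ⊢
        omega
    · rw [Equiv.swap_apply_of_ne_of_ne hrna hrb]
      have h1 := Fin.val_ne_iff.mpr hrb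
      by_cases hsa : s = a
      · rw [hsa, Equiv.swap_apply_left]
        rw [hsa] at hlt
        rw [Fin.lt_def] at hlt ⊢
        omega
      · rwa [Equiv.swap_apply_of_ne_of_ne hsa hsnb]

lemma trues_swap {prm : Fin NA → Bool} (a b : Fin NA) :
    (Finset.univ.filter fun r => prm (Equiv.swap a b r) = true).card =
      (Finset.univ.filter fun r => prm r = true).card := by
  refine Finset.card_nbij' (fun s => Equiv.swap a b s) (fun s => Equiv.swap a b s)
    ?_ ?_ ?_ ?_
  · intro s hs
    rw [Finset.mem_coe, Finset.mem_filter] at hs ⊢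
    exact ⟨Finset.mem_univ _, hs.2⟩
  · intro t ht
    rw [Finset.mem_coe, Finset.mem_filter] at ht ⊢
    refine ⟨Finset.mem_univ _, ?_⟩
    rw [Equiv.swap_apply_self]
    exact ht.2
  · intro s _
    show Equiv.swap a b (Equiv.swap a b s) = s
    rw [Equiv.swap_apply_self]
  · intro t _
    show Equiv.swap a b (Equiv.swap a b t) = t
    rw [Equiv.swap_apply_self]

lemma exists_adj {prm : Fin NA → Bool} (h : (invs prm).card ≠ 0) :
    ∃ a b : Fin NA, (b : ℕ) = (a : ℕ) + 1 ∧ prm a = true ∧ prm b = false := by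
  rw [Finset.card_ne_zero] at h
  obtain ⟨⟨r, s⟩, hmem⟩ := h
  simp only [invs, Finset.mem_filter, Finset.mem_univ, true_and] at hmem
  obtain ⟨hlt, hr, hs⟩ := hmem
  suffices H : ∀ k (r s : Fin NA), (s : ℕ) - (r : ℕ) ≤ k → r < s → prm r = true →
      prm s = false → ∃ a b : Fin NA, (b : ℕ) = (a : ℕ) + 1 ∧ prm a = true ∧ prm b = false by
    exact H ((s : ℕ) - (r : ℕ)) r s le_rfl hlt hr hs
  intro k
  induction k with
  | zero =>
    intro r s hk hlt _ _
    rw [Fin.lt_def] at hlt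
    omega
  | succ k ih =>
    intro r s hk hlt hr hs
    have hlt' := Fin.lt_def.1 hlt
    have hr1 : (r : ℕ) + 1 < NA := by have := s.isLt; omega
    by_cases h' : prm ⟨(r : ℕ) + 1, hr1⟩ = true
    · by_cases heq : ((r : ℕ) + 1) = (s : ℕ)
      · rw [show (⟨(r : ℕ) + 1, hr1⟩ : Fin NA) = s from Fin.ext heq] at h'
        rw [hs] at h'
        exact absurd h' (by simp)
      · refine ih ⟨(r : ℕ) + 1, hr1⟩ s ?_ ?_ h' hs
        · show (s : ℕ) - ((r : ℕ) + 1) ≤ k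
          omega
        · rw [Fin.lt_def]
          show (r : ℕ) + 1 < (s : ℕ)
          omega
    · exact ⟨r, ⟨(r : ℕ) + 1, hr1⟩, rfl, hr, by simpa using h'⟩

lemma sorted_eq_prmFirst {m n : ℕ} (prm : Fin (m + n) → Bool)
    (hinv : (invs prm).card = 0)
    (htr : (Finset.univ.filter fun r => prm r = true).card = n) :
    prm = prmFirst m n := by
  have hmono : ∀ r s : Fin (m + n), r < s → prm r = true → prm s = true := by
    intro r s hlt hr
    by_contra hs
    have hs' : prm s = false := by simpa using hs
    have hmem : (r, s) ∈ invs prm := by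
      simp only [invs, Finset.mem_filter, Finset.mem_univ, true_and]
      exact ⟨hlt, hr, hs'⟩
    rw [Finset.card_eq_zero] at hinv
    rw [hinv] at hmem
    exact absurd hmem (Finset.notMem_empty _)
  have huniv : (Finset.univ : Finset (Fin (m + n))).card = m + n := by
    rw [Finset.card_univ, Fintype.card_fin]
  have hfneg : Finset.univ.filter (fun r : Fin (m + n) => ¬ prm r = true) =
      Finset.univ.filter (fun r : Fin (m + n) => prm r = false) := by
    ext r; simp
  have hfalse : (Finset.univ.filter fun r : Fin (m + n) => prm r = false).card = m := by
    have := Finset.card_filter_add_card_filter_not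
      (s := (Finset.univ : Finset (Fin (m + n)))) (p := fun r => prm r = true)
    rw [hfneg] at this
    omega
  funext r
  unfold prmFirst
  by_cases hr : m ≤ (r : ℕ)
  · rw [decide_eq_true (by exact hr)]
    by_contra hfr
    have hfr' : prm r = false := by simpa using hfr
    have hsub : Finset.Iic r ⊆ Finset.univ.filter fun s : Fin (m + n) => prm s = false := by
      intro s hsm
      rw [Finset.mem_Iic] at hsm
      rw [Finset.mem_filter]
      refine ⟨Finset.mem_univ _, ?_⟩
      rcases eq_or_lt_of_le hsm with rfl | hslt
      · exact hfr'
      · by_contra hst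
        have : prm s = true := by simpa using hst
        rw [hmono s r hslt this] at hfr'
        exact absurd hfr' (by simp)
    have := Finset.card_le_card hsub
    rw [Fin.card_Iic, hfalse] at this
    omega
  · rw [decide_eq_false (by exact hr)]
    by_contra hfr
    have hfr' : prm r = true := by simpa using hfr
    have hsub : Finset.Ici r ⊆ Finset.univ.filter fun s : Fin (m + n) => prm s = true := by
      intro s hsm
      rw [Finset.mem_Ici] at hsm
      rw [Finset.mem_filter]
      refine ⟨Finset.mem_univ _, ?_⟩
      rcases eq_or_lt_of_le hsm with rfl | hslt
      · exact hfr'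
      · exact hmono r s hslt hfr'
    have := Finset.card_le_card hsub
    rw [Fin.card_Ici, htr] at this
    omega

end Letters


/-- **Specialisation to the first variation**: for every marked alphabet `R′` on
`{1,…,m+n}` with `n` primed letters, setting all factorial parameters to zero recovers
the classical supersymmetric skew Schur function `s_{λ/μ}(x,y)` (defined over the
alphabet `1 < 2 < ⋯ < m < 1′ < 2′ < ⋯ < n′`). -/
theorem fact_superSchur_zero_spec (m n : ℕ) (prm : Fin (m + n) → Bool)
    (hprm : (Finset.univ.filter fun r => prm r = true).card = n)
    (lam mu : List ℕ) (hlam : IsPartition lam) (hmu : IsPartition mu)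
    (hsub : Contained mu lam)
    (x : Fin m → A) (y : Fin n → A) :
    tabSum (cells lam mu) prm (wFact prm x y (fun _ => (0 : A))) =
      superSchur lam mu x y := by
  have hC : SkewShape (cells lam mu) := skewShape_cells hlam hmu
  rw [wFact_zero prm x y]
  suffices H : ∀ K (prm : Fin (m + n) → Bool), (invs prm).card = K →
      (Finset.univ.filter fun r => prm r = true).card = n →
      tabSum (cells lam mu) prm (fun r _ => wgt0 m n prm x y r) =
        superSchur lam mu x y by
    exact H _ prm rfl hprm
  intro K
  induction K using Nat.strong_induction_on with
  | _ K ih =>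
    intro prm hK htr
    by_cases h0 : K = 0
    · subst h0
      rw [sorted_eq_prmFirst prm hK htr]
      unfold superSchur
      have hw : (fun (r : Fin (m + n)) (_ : ℤ) => wgt0 m n (prmFirst m n) x y r) =
          wNinth (prmFirst m n) (fun k _ => x k) (fun l _ => y l) := by
        funext r c
        unfold wgt0 wNinth
        rfl
      rw [hw]
    · obtain ⟨a, b, hab, hpa, hpb⟩ := exists_adj (prm := prm) (by omega)
      have hne : prm a ≠ prm b := by rw [hpa, hpb]; simp
      have h2a : (fun s => prm (Equiv.swap a b s)) a = false := by
        show prm (Equiv.swap a b a) = false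
        rw [Equiv.swap_apply_left, hpb]
      have h2b : (fun s => prm (Equiv.swap a b s)) b = true := by
        show prm (Equiv.swap a b b) = true
        rw [Equiv.swap_apply_right, hpa]
      have h2o : ∀ r : Fin (m + n), r ≠ a → r ≠ b →
          prm r = (fun s => prm (Equiv.swap a b s)) r := by
        intro r hra hrb
        show prm r = prm (Equiv.swap a b r)
        rw [Equiv.swap_apply_of_ne_of_ne hra hrb]
      have hswap := tabSum_swap (C := cells lam mu)
        (prm := fun s => prm (Equiv.swap a b s)) (prm2 := prm) hC hab h2a h2b hpa hpb
        h2o (wgt0 m n (fun s => prm (Equiv.swap a b s)) x y)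
      have hwsw : ∀ r : Fin (m + n),
          wgt0 m n (fun s => prm (Equiv.swap a b s)) x y (Equiv.swap a b r) =
            wgt0 m n prm x y r := by
        intro r
        rw [wgt0_swap hab hne x y (Equiv.swap a b r), Equiv.swap_apply_self]
      have hstep : tabSum (cells lam mu) prm (fun r _ => wgt0 m n prm x y r) =
          tabSum (cells lam mu) (fun s => prm (Equiv.swap a b s))
            (fun r _ => wgt0 m n (fun s => prm (Equiv.swap a b s)) x y r) := by
        rw [hswap]
        congr 1
        funext r c
        rw [hwsw r]
      rw [hstep]
      exact ih _ (by rw [← hK]; exact invs_swap_lt hab hpa hpb)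
        (fun s => prm (Equiv.swap a b s)) rfl
        (by rw [trues_swap a b, htr])


end SuperSchur
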